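/- arXiv:2112.04670 — 3 statements merged into one kernel-verified Lean document; each statement's English description precedes it below -/
import Mathlib

section
/- For every ordinal β < α, the set X^{β+1} ∖ closure(conv(⋃_{0≤γ≤β} X^γ)) is nonempty, where the closure is the norm closure in Z*; in particular there is a vector of X^{β+1} separated from conv(⋃_{0≤γ≤β} X^γ) by a norm-continuous linear functional on Z*. -/
open Set Filter Topology

noncomputable section

namespace Paper

/-- `y` is an up-neighbor of `x` within the subforest `S`: both belong to `S`, `x < y`,
and no vertex of `S` lies strictly between them. -/
def UpNbrIn {P : Type*} [PartialOrder P] (S : Set P) (x y : P) : Prop :=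
  x ∈ S ∧ y ∈ S ∧ x < y ∧ ∀ z ∈ S, ¬(x < z ∧ z < y)

/-- `x` is a terminal vertex of the subforest `S`: it has no up-neighbors within `S`. -/
def TerminalIn {P : Type*} [PartialOrder P] (S : Set P) (x : P) : Prop :=
  x ∈ S ∧ ∀ y, ¬UpNbrIn S x y

/-- One step of the derived forest operation: delete every terminal vertex whose
down-neighbor has infinitely many terminal up-neighbors. -/
def derStep {P : Type*} [PartialOrder P] (S : Set P) : Set P :=
  S \ {x | TerminalIn S x ∧ ∃ u, UpNbrIn S u x ∧ {y | UpNbrIn S u y ∧ TerminalIn S y}.Infinite}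

/-- Transfinite iteration of the derived forest operation: `derIter S β = S^{(β)}`,
with intersections at limit stages. -/
def derIter {P : Type*} [PartialOrder P] (S : Set P) (β : Ordinal) : Set P :=
  Ordinal.limitRecOn β S (fun _ T => derStep T)
    (fun β _ ih => ⋂ (γ : Ordinal), ⋂ (h : γ < β), ih γ h)

/-- Weak* closure of a set in the dual of a real normed space. -/
def wcl {Z : Type*} [NormedAddCommGroup Z] [NormedSpace ℝ Z]
    (A : Set (StrongDual ℝ Z)) : Set (StrongDual ℝ Z) :=
  StrongDual.toWeakDual ⁻¹' closure (StrongDual.toWeakDual '' A)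

/-- The weak* derived set `A^{(1)} = ⋃ₙ weak*-closure (A ∩ n B_{Z*})`. -/
def derSet {Z : Type*} [NormedAddCommGroup Z] [NormedSpace ℝ Z]
    (A : Set (StrongDual ℝ Z)) : Set (StrongDual ℝ Z) :=
  ⋃ n : ℕ, wcl (A ∩ {f | ‖f‖ ≤ (n : ℝ)})

/-- Transfinite weak* derived sets: `A^{(0)} = A`, `A^{(β+1)} = (A^{(β)})^{(1)}`, and
`A^{(β)} = ⋃_{γ<β} A^{(γ)}` at limit stages. -/
def derSetIter {Z : Type*} [NormedAddCommGroup Z] [NormedSpace ℝ Z]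
    (A : Set (StrongDual ℝ Z)) (α : Ordinal) : Set (StrongDual ℝ Z) :=
  Ordinal.limitRecOn α A (fun _ T => derSet T)
    (fun α _ ih => ⋃ (β : Ordinal), ⋃ (h : β < α), ih β h)

/-- The coefficient attached to a vertex `u` of the forest: the label of its down-neighbor,
or the label of `u` itself when `u` is an initial vertex (`n₀ = n₁`). -/
def coefN {P : Type*} [PartialOrder P] (e : P → ℕ) (u : P) : ℕ :=
  letI := Classical.dec (∃ w, w ⋖ u)
  if h : ∃ w, w ⋖ u then e h.choose else e u

/-- The vector `z*(v)` shortened to the subforest `S`: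
`∑_{u ≤ v, u ∈ S} n_{i-1} z*_{n_i}`. -/
def shortVec {P : Type*} [PartialOrder P] {Z : Type*} [NormedAddCommGroup Z] [NormedSpace ℝ Z]
    (e : P → ℕ) (zs : ℕ → StrongDual ℝ Z) (S : Set P) (v : P) : StrongDual ℝ Z :=
  ∑ᶠ u ∈ ({w | w ≤ v} ∩ S), (coefN e u : ℝ) • zs (e u)

/-- The shortening `X^β` of the set `X_α` to the subforest `S` (for `S = (F_α)^β`);
for `S = univ` this is `X_α` itself. -/
def XsetOf {P : Type*} [PartialOrder P] {Z : Type*} [NormedAddCommGroup Z] [NormedSpace ℝ Z]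
    (e : P → ℕ) (zs : ℕ → StrongDual ℝ Z) (S : Set P) : Set (StrongDual ℝ Z) :=
  {x | ∃ v : P, (¬∃ y, v ⋖ y) ∧ x = shortVec e zs S v}

/-- The largest index in the support of a vector of `X^β` (read off by evaluating
against the basic sequence); it is the label of the vertex `v(x)`. -/
def topIdx {Z : Type*} [NormedAddCommGroup Z] [NormedSpace ℝ Z]
    (z : ℕ → Z) (x : StrongDual ℝ Z) : ℕ :=
  sSup {n | x (z n) ≠ 0}

/-- The vector `y(x)`: `x` with the coordinate at its top vertex `v(x)` replaced by `0`. -/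
def truncTop {Z : Type*} [NormedAddCommGroup Z] [NormedSpace ℝ Z]
    (z : ℕ → Z) (zs : ℕ → StrongDual ℝ Z) (x : StrongDual ℝ Z) :
    StrongDual ℝ Z :=
  x - x (z (topIdx z x)) • zs (topIdx z x)

theorem zero_or_succ_or_limit_old (o : Ordinal) :
    o = 0 ∨ (∃ a, o = Order.succ a) ∨ Order.IsSuccLimit o := by
  rcases Ordinal.zero_or_succ_or_isSuccLimit o with h | ⟨a, rfl⟩ | h
  exacts [Or.inl h, Or.inr (Or.inl ⟨a, rfl⟩), Or.inr (Or.inr h)]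

section Basic
variable {P : Type*} [PartialOrder P] {S T : Set P}

theorem derIter_zero (S : Set P) : derIter S 0 = S := Ordinal.limitRecOn_zero ..

theorem derIter_succ (S : Set P) (γ : Ordinal) :
    derIter S (γ + 1) = derStep (derIter S γ) := by
  rw [derIter, Ordinal.add_one_eq_succ, Ordinal.limitRecOn_succ]; rfl

theorem derIter_limit (S : Set P) {γ : Ordinal} (h : Order.IsSuccLimit γ) :
    derIter S γ = ⋂ (δ : Ordinal), ⋂ (_ : δ < γ), derIter S δ := by
  rw [derIter, Ordinal.limitRecOn_limit _ _ _ _ h]; rfl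

theorem derStep_subset (S : Set P) : derStep S ⊆ S := diff_subset

theorem derIter_antitone (S : Set P) {ρ σ : Ordinal} (h : ρ ≤ σ) :
    derIter S σ ⊆ derIter S ρ := by
  induction σ using Ordinal.induction with
  | h σ ih =>
    rcases zero_or_succ_or_limit_old σ with h0 | ⟨δ, rfl⟩ | hl
    · subst h0; obtain rfl : ρ = 0 := le_antisymm h (zero_le : (0 : Ordinal) ≤ ρ); exact le_rfl
    · rw [← Ordinal.add_one_eq_succ] at *
      rcases eq_or_lt_of_le h with rfl | hlt
      · exact le_rfl
      · have hρδ : ρ ≤ δ := Order.lt_succ_iff.mp (by rwa [Ordinal.add_one_eq_succ] at hlt)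
        refine subset_trans ?_ (ih δ (by rw [Ordinal.add_one_eq_succ]; exact Order.lt_succ δ) hρδ)
        rw [derIter_succ]; exact derStep_subset _
    · rcases eq_or_lt_of_le h with rfl | hlt
      · exact le_rfl
      · rw [derIter_limit S hl]
        exact fun x hx => Set.mem_iInter₂.mp hx ρ hlt

theorem derIter_subset (S : Set P) (ρ : Ordinal) : derIter S ρ ≤ S := by
  have := derIter_antitone S (zero_le : (0 : Ordinal) ≤ ρ); rwa [derIter_zero] at this

theorem isMin_not_deleted {x : P} (hx : x ∈ S) (hm : ∀ z : P, ¬ z < x) :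
    x ∈ derStep S := by
  refine ⟨hx, fun hdel => ?_⟩
  obtain ⟨-, u, hu, -⟩ := hdel
  exact hm u hu.2.2.1

theorem isMin_mem_derIter {x : P} (hx : x ∈ S) (hm : ∀ z : P, ¬ z < x) (ρ : Ordinal) :
    x ∈ derIter S ρ := by
  induction ρ using Ordinal.induction with
  | h ρ ih =>
    rcases zero_or_succ_or_limit_old ρ with h0 | ⟨δ, rfl⟩ | hl
    · subst h0; rwa [derIter_zero]
    · rw [← Ordinal.add_one_eq_succ, derIter_succ]
      exact isMin_not_deleted (ih δ (by rw [← Ordinal.add_one_eq_succ]; exact Order.lt_succ δ)) hm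
    · rw [derIter_limit S hl]; exact Set.mem_iInter₂.mpr fun δ hδ => ih δ hδ

end Basic
section Fin
variable {P : Type*} [PartialOrder P] {S T : Set P}
variable (hfin : ∀ x : P, {y : P | y ≤ x}.Finite)
include hfin

/-- extract a global minimal element below x -/
theorem exists_min_le (x : P) : ∃ m, m ≤ x ∧ ∀ z : P, ¬ z < m := by
  obtain ⟨m, hm, hmin⟩ := (hfin x).exists_le_minimal (mem_setOf.mpr (le_refl x))
  refine ⟨m, hmin.1, fun z hz => ?_⟩
  have hzx : z ∈ {y : P | y ≤ x} := le_trans hz.le hmin.1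
  exact absurd (hmin.2 hzx hz.le) (not_le_of_gt hz)

/-- a cover of a below b -/
theorem exists_covby_le {a b : P} (hab : a < b) : ∃ u, a ⋖ u ∧ u ≤ b := by
  have hne : b ∈ {z : P | a < z ∧ z ≤ b} := ⟨hab, le_refl b⟩
  have hfs : {z : P | a < z ∧ z ≤ b}.Finite := (hfin b).subset fun z hz => hz.2
  obtain ⟨u, hu, hmin⟩ := hfs.exists_le_minimal hne
  refine ⟨u, ⟨hmin.1.1, fun z haz hzu => ?_⟩, hmin.1.2⟩
  have hz : z ∈ {z : P | a < z ∧ z ≤ b} := ⟨haz, le_trans hzu.le hmin.1.2⟩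
  exact absurd (hmin.2 hz hzu.le) (not_le_of_gt hzu)

/-- an up-neighbor of a within T, below b -/
theorem exists_upnbr {a b : P} (ha : a ∈ T) (hb : b ∈ T) (hab : a < b) :
    ∃ u, UpNbrIn T a u ∧ u ≤ b := by
  have hne : b ∈ {z : P | z ∈ T ∧ a < z ∧ z ≤ b} := ⟨hb, hab, le_refl b⟩
  have hfs : {z : P | z ∈ T ∧ a < z ∧ z ≤ b}.Finite := (hfin b).subset fun z hz => hz.2.2
  obtain ⟨u, hu, hmin⟩ := hfs.exists_le_minimal hne
  refine ⟨u, ⟨ha, hmin.1.1, hmin.1.2.1, fun z hz hbet => ?_⟩, hmin.1.2.2⟩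
  have hz' : z ∈ {z : P | z ∈ T ∧ a < z ∧ z ≤ b} :=
    ⟨hz, hbet.1, le_trans hbet.2.le hmin.1.2.2⟩
  exact absurd (hmin.2 hz' hbet.2.le) (not_le_of_gt hbet.2)

theorem not_terminal_of_lt {a b : P} (ha : a ∈ T) (hb : b ∈ T) (hab : a < b) :
    ¬ TerminalIn T a := by
  obtain ⟨u, hu, -⟩ := exists_upnbr hfin ha hb hab
  exact fun ht => ht.2 u hu

theorem terminal_no_above {a : P} (ht : TerminalIn T a) : ∀ b ∈ T, ¬ a < b := by
  intro b hb hab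
  exact not_terminal_of_lt hfin ht.1 hb hab ht

/-- down-closure of derIter univ -/
theorem derIter_downClosed {u x : P} (hux : u ≤ x) (ρ : Ordinal)
    (hx : x ∈ derIter (univ : Set P) ρ) : u ∈ derIter (univ : Set P) ρ := by
  induction ρ using Ordinal.induction with
  | h ρ ih =>
    rcases zero_or_succ_or_limit_old ρ with h0 | ⟨δ, rfl⟩ | hl
    · subst h0; rw [derIter_zero]; trivial
    · rw [← Ordinal.add_one_eq_succ, derIter_succ] at *
      have hδ : δ < δ + 1 := by rw [Ordinal.add_one_eq_succ]; exact Order.lt_succ δ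
      have hxδ : x ∈ derIter (univ : Set P) δ := derStep_subset _ hx
      have huδ : u ∈ derIter (univ : Set P) δ := ih δ hδ hxδ
      rcases eq_or_lt_of_le hux with rfl | hlt
      · exact hx
      · refine ⟨huδ, fun hdel => ?_⟩
        exact not_terminal_of_lt hfin huδ hxδ hlt hdel.1
    · rw [derIter_limit _ hl] at *
      exact Set.mem_iInter₂.mpr fun δ hδ => ih δ hδ (Set.mem_iInter₂.mp hx δ hδ)

end Fin
section Iso
variable {P Q : Type*} [PartialOrder P] [PartialOrder Q] (f : P ≃o Q)

theorem upNbrIn_preimage (T : Set Q) (x y : P) :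
    UpNbrIn (f ⁻¹' T) x y ↔ UpNbrIn T (f x) (f y) := by
  constructor
  · rintro ⟨hx, hy, hlt, hbet⟩
    refine ⟨hx, hy, f.lt_iff_lt.mpr hlt, fun z hz hzb => ?_⟩
    exact hbet (f.symm z) (by simpa using hz)
      ⟨by simpa [← f.lt_iff_lt] using hzb.1, by simpa [← f.lt_iff_lt] using hzb.2⟩
  · rintro ⟨hx, hy, hlt, hbet⟩
    refine ⟨hx, hy, f.lt_iff_lt.mp hlt, fun z hz hzb => ?_⟩
    exact hbet (f z) hz ⟨f.lt_iff_lt.mpr hzb.1, f.lt_iff_lt.mpr hzb.2⟩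

theorem terminalIn_preimage (T : Set Q) (x : P) :
    TerminalIn (f ⁻¹' T) x ↔ TerminalIn T (f x) := by
  constructor
  · rintro ⟨hx, hter⟩
    refine ⟨hx, fun y hy => ?_⟩
    exact hter (f.symm y) (by rw [upNbrIn_preimage]; simpa using hy)
  · rintro ⟨hx, hter⟩
    exact ⟨hx, fun y hy => hter (f y) ((upNbrIn_preimage f T x y).mp hy)⟩

theorem derStep_preimage (T : Set Q) : derStep (f ⁻¹' T) = f ⁻¹' derStep T := by
  ext x
  simp only [derStep, Set.mem_diff, Set.mem_preimage, Set.mem_setOf_eq]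
  refine and_congr (Iff.rfl) (not_congr ?_)
  rw [terminalIn_preimage]
  refine and_congr (Iff.rfl) ?_
  constructor
  · rintro ⟨u, hu, hinf⟩
    refine ⟨f u, (upNbrIn_preimage f T u x).mp hu, ?_⟩
    have : {y | UpNbrIn T (f u) y ∧ TerminalIn T y} =
        f '' {y | UpNbrIn (f ⁻¹' T) u y ∧ TerminalIn (f ⁻¹' T) y} := by
      ext y
      simp only [Set.mem_setOf_eq, Set.mem_image]
      constructor
      · intro hy
        exact ⟨f.symm y, ⟨by rw [upNbrIn_preimage]; simpa using hy.1,
          by rw [terminalIn_preimage]; simpa using hy.2⟩, by simp⟩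
      · rintro ⟨y', ⟨h1, h2⟩, rfl⟩
        exact ⟨(upNbrIn_preimage f T u y').mp h1, (terminalIn_preimage f T y').mp h2⟩
    rw [this]
    exact hinf.image (f.injective.injOn)
  · rintro ⟨u, hu, hinf⟩
    refine ⟨f.symm u, ?_, ?_⟩
    · rw [upNbrIn_preimage]; simpa using hu
    · have : {y | UpNbrIn (f ⁻¹' T) (f.symm u) y ∧ TerminalIn (f ⁻¹' T) y} =
          f.symm '' {y | UpNbrIn T u y ∧ TerminalIn T y} := by
        ext y
        simp only [Set.mem_setOf_eq, Set.mem_image, upNbrIn_preimage, terminalIn_preimage]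
        constructor
        · intro hy
          exact ⟨f y, by simpa using hy, by simp⟩
        · rintro ⟨y', hy', rfl⟩
          simpa using hy'
      rw [this]
      exact hinf.image (f.symm.injective.injOn)

theorem derIter_preimage (T : Set Q) (ρ : Ordinal) :
    derIter (f ⁻¹' T) ρ = f ⁻¹' derIter T ρ := by
  induction ρ using Ordinal.induction with
  | h ρ ih =>
    rcases zero_or_succ_or_limit_old ρ with h0 | ⟨δ, rfl⟩ | hl
    · subst h0; rw [derIter_zero, derIter_zero]
    · rw [← Ordinal.add_one_eq_succ, derIter_succ, derIter_succ,
        ih δ (by rw [← Ordinal.add_one_eq_succ]; exact Order.lt_succ δ), derStep_preimage]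
    · rw [derIter_limit _ hl, derIter_limit _ hl]
      ext x
      simp only [Set.mem_iInter, Set.mem_preimage]
      exact forall₂_congr fun δ hδ => by rw [ih δ hδ]; rfl

theorem derIter_iso_mem (ρ : Ordinal) (x : P) :
    x ∈ derIter (univ : Set P) ρ ↔ f x ∈ derIter (univ : Set Q) ρ := by
  have : (univ : Set P) = f ⁻¹' (univ : Set Q) := by simp
  rw [this, derIter_preimage]; rfl

end Iso
section Sig
variable {ι : Type*} {W : ι → Type*} [∀ i, PartialOrder (W i)]

theorem sigma_lt_fst {x y : Σ i, W i} (h : x < y) : x.1 = y.1 :=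
  (Sigma.lt_def.mp h).choose

theorem sigma_le_fst {x y : Σ i, W i} (h : x ≤ y) : x.1 = y.1 :=
  (Sigma.le_def.mp h).choose

def sigSet (T : ∀ i, Set (W i)) : Set (Σ i, W i) := {x | x.2 ∈ T x.1}

theorem upNbrIn_sigma (T : ∀ i, Set (W i)) {i : ι} {a b : W i} :
    UpNbrIn (sigSet T) ⟨i, a⟩ ⟨i, b⟩ ↔ UpNbrIn (T i) a b := by
  constructor
  · rintro ⟨ha, hb, hlt, hbet⟩
    refine ⟨ha, hb, Sigma.mk_lt_mk_iff.mp hlt, fun z hz hzb => ?_⟩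
    exact hbet ⟨i, z⟩ hz ⟨Sigma.mk_lt_mk_iff.mpr hzb.1, Sigma.mk_lt_mk_iff.mpr hzb.2⟩
  · rintro ⟨ha, hb, hlt, hbet⟩
    refine ⟨ha, hb, Sigma.mk_lt_mk_iff.mpr hlt, fun z hz hzb => ?_⟩
    obtain ⟨j, c⟩ := z
    obtain rfl : i = j := sigma_lt_fst hzb.1
    exact hbet c hz ⟨Sigma.mk_lt_mk_iff.mp hzb.1, Sigma.mk_lt_mk_iff.mp hzb.2⟩

theorem upNbrIn_sigma_fst {T : ∀ i, Set (W i)} {x y : Σ i, W i}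
    (h : UpNbrIn (sigSet T) x y) : x.1 = y.1 := sigma_lt_fst h.2.2.1

theorem terminalIn_sigma (T : ∀ i, Set (W i)) {i : ι} {a : W i} :
    TerminalIn (sigSet T) ⟨i, a⟩ ↔ TerminalIn (T i) a := by
  constructor
  · rintro ⟨ha, hter⟩
    exact ⟨ha, fun y hy => hter ⟨i, y⟩ ((upNbrIn_sigma T).mpr hy)⟩
  · rintro ⟨ha, hter⟩
    refine ⟨ha, fun y hy => ?_⟩
    obtain ⟨j, c⟩ := y
    obtain rfl : i = j := upNbrIn_sigma_fst hy
    exact hter c ((upNbrIn_sigma T).mp hy)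

theorem derStep_sigma (T : ∀ i, Set (W i)) :
    derStep (sigSet T) = sigSet (fun i => derStep (T i)) := by
  ext ⟨i, a⟩
  show _ ∈ derStep (sigSet T) ↔ a ∈ derStep (T i)
  simp only [derStep, Set.mem_diff, Set.mem_setOf_eq]
  refine and_congr Iff.rfl (not_congr ?_)
  rw [terminalIn_sigma]
  refine and_congr Iff.rfl ?_
  constructor
  · rintro ⟨u, hu, hinf⟩
    obtain ⟨j, c⟩ := u
    obtain rfl : j = i := upNbrIn_sigma_fst hu
    refine ⟨c, (upNbrIn_sigma T).mp hu, ?_⟩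
    have heq : {y | UpNbrIn (sigSet T) ⟨j, c⟩ y ∧ TerminalIn (sigSet T) y} =
        Sigma.mk j '' {b | UpNbrIn (T j) c b ∧ TerminalIn (T j) b} := by
      ext y
      simp only [Set.mem_setOf_eq, Set.mem_image]
      constructor
      · intro hy
        obtain ⟨k, d⟩ := y
        obtain rfl : j = k := upNbrIn_sigma_fst hy.1
        exact ⟨d, ⟨(upNbrIn_sigma T).mp hy.1, (terminalIn_sigma T).mp hy.2⟩, rfl⟩
      · rintro ⟨d, ⟨h1, h2⟩, rfl⟩
        exact ⟨(upNbrIn_sigma T).mpr h1, (terminalIn_sigma T).mpr h2⟩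
    rw [heq] at hinf
    exact (Set.infinite_image_iff sigma_mk_injective.injOn).mp hinf
  · rintro ⟨u, hu, hinf⟩
    refine ⟨⟨i, u⟩, (upNbrIn_sigma T).mpr hu, ?_⟩
    have heq : {y | UpNbrIn (sigSet T) ⟨i, u⟩ y ∧ TerminalIn (sigSet T) y} =
        Sigma.mk i '' {b | UpNbrIn (T i) u b ∧ TerminalIn (T i) b} := by
      ext y
      simp only [Set.mem_setOf_eq, Set.mem_image]
      constructor
      · intro hy
        obtain ⟨k, d⟩ := y
        obtain rfl : i = k := upNbrIn_sigma_fst hy.1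
        exact ⟨d, ⟨(upNbrIn_sigma T).mp hy.1, (terminalIn_sigma T).mp hy.2⟩, rfl⟩
      · rintro ⟨d, ⟨h1, h2⟩, rfl⟩
        exact ⟨(upNbrIn_sigma T).mpr h1, (terminalIn_sigma T).mpr h2⟩
    rw [heq]
    exact hinf.image sigma_mk_injective.injOn

theorem derIter_sigma (ρ : Ordinal) :
    derIter (univ : Set (Σ i, W i)) ρ = sigSet (fun i => derIter (univ : Set (W i)) ρ) := by
  induction ρ using Ordinal.induction with
  | h ρ ih =>
    rcases zero_or_succ_or_limit_old ρ with h0 | ⟨δ, rfl⟩ | hl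
    · subst h0; simp only [derIter_zero]; ext x; simp [sigSet]
    · rw [← Ordinal.add_one_eq_succ, derIter_succ,
        ih δ (by rw [← Ordinal.add_one_eq_succ]; exact Order.lt_succ δ), derStep_sigma]
      ext x; simp only [sigSet, Set.mem_setOf_eq, derIter_succ]
    · ext x
      constructor
      · intro h
        show x.2 ∈ derIter (univ : Set (W x.1)) ρ
        rw [derIter_limit _ hl]
        rw [derIter_limit _ hl] at h
        exact Set.mem_iInter₂.mpr fun δ hδ => by
          have h2 := Set.mem_iInter₂.mp h δ hδ; rwa [ih δ hδ] at h2
      · intro h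
        have h' : x.2 ∈ derIter (univ : Set (W x.1)) ρ := h
        rw [derIter_limit _ hl] at h'
        rw [derIter_limit _ hl]
        refine Set.mem_iInter₂.mpr fun δ hδ => ?_
        rw [ih δ hδ]
        show x.2 ∈ derIter (univ : Set (W x.1)) δ
        exact Set.mem_iInter₂.mp h' δ hδ

end Sig
set_option linter.unusedSectionVars false
section Bot
variable {P : Type*} [PartialOrder P] {T : Set P}

def botSet (T : Set P) : Set (WithBot P) := {⊥} ∪ (fun p : P => (p : WithBot P)) '' T

theorem bot_mem_botSet (T : Set P) : (⊥ : WithBot P) ∈ botSet T := Or.inl rfl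

theorem coe_mem_botSet {a : P} : (a : WithBot P) ∈ botSet T ↔ a ∈ T := by
  simp [botSet, WithBot.coe_eq_coe]

theorem not_upNbrIn_bot (S : Set (WithBot P)) (u : WithBot P) :
    ¬ UpNbrIn S u (⊥ : WithBot P) := fun h => not_lt_bot h.2.2.1

theorem upNbrIn_bot_coe {a b : P} :
    UpNbrIn (botSet T) (a : WithBot P) (b : WithBot P) ↔ UpNbrIn T a b := by
  constructor
  · rintro ⟨ha, hb, hlt, hbet⟩
    refine ⟨coe_mem_botSet.mp ha, coe_mem_botSet.mp hb, WithBot.coe_lt_coe.mp hlt,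
      fun z hz hzb => ?_⟩
    exact hbet (z : WithBot P) (coe_mem_botSet.mpr hz)
      ⟨WithBot.coe_lt_coe.mpr hzb.1, WithBot.coe_lt_coe.mpr hzb.2⟩
  · rintro ⟨ha, hb, hlt, hbet⟩
    refine ⟨coe_mem_botSet.mpr ha, coe_mem_botSet.mpr hb, WithBot.coe_lt_coe.mpr hlt,
      fun z hz hzb => ?_⟩
    induction z with
    | bot => exact not_lt_bot hzb.1
    | coe c =>
        exact hbet c (coe_mem_botSet.mp hz)
          ⟨WithBot.coe_lt_coe.mp hzb.1, WithBot.coe_lt_coe.mp hzb.2⟩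

theorem upNbrIn_bot_bot {b : P} :
    UpNbrIn (botSet T) (⊥ : WithBot P) (b : WithBot P) ↔ (b ∈ T ∧ ∀ z ∈ T, ¬ z < b) := by
  constructor
  · rintro ⟨-, hb, -, hbet⟩
    refine ⟨coe_mem_botSet.mp hb, fun z hz hzb => ?_⟩
    exact hbet (z : WithBot P) (coe_mem_botSet.mpr hz)
      ⟨WithBot.bot_lt_coe z, WithBot.coe_lt_coe.mpr hzb⟩
  · rintro ⟨hb, hmin⟩
    refine ⟨bot_mem_botSet T, coe_mem_botSet.mpr hb, WithBot.bot_lt_coe b, fun z hz hzb => ?_⟩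
    induction z with
    | bot => exact lt_irrefl _ hzb.1
    | coe c => exact hmin c (coe_mem_botSet.mp hz) (WithBot.coe_lt_coe.mp hzb.2)

theorem terminalIn_bot_coe {a : P} :
    TerminalIn (botSet T) (a : WithBot P) ↔ TerminalIn T a := by
  constructor
  · rintro ⟨ha, hter⟩
    exact ⟨coe_mem_botSet.mp ha, fun y hy => hter (y : WithBot P) (upNbrIn_bot_coe.mpr hy)⟩
  · rintro ⟨ha, hter⟩
    refine ⟨coe_mem_botSet.mpr ha, fun y hy => ?_⟩
    induction y with
    | bot => exact not_upNbrIn_bot _ _ hy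
    | coe b => exact hter b (upNbrIn_bot_coe.mp hy)

theorem bot_mem_derStep (S : Set (WithBot P)) (hS : (⊥ : WithBot P) ∈ S) :
    (⊥ : WithBot P) ∈ derStep S := by
  refine ⟨hS, fun hdel => ?_⟩
  obtain ⟨-, u, hu, -⟩ := hdel
  exact not_upNbrIn_bot S u hu

theorem derStep_bot (hfin : ∀ x : P, {y : P | y ≤ x}.Finite)
    (hminT : ∀ m : P, (∀ z : P, ¬ z < m) → m ∈ T)
    (hbad : {m : P | (∀ z : P, ¬ z < m) ∧ ∀ p ∈ T, ¬ m < p}.Finite) :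
    derStep (botSet T) = botSet (derStep T) := by
  have hcoeset : ∀ c : P, {y | UpNbrIn (botSet T) (c : WithBot P) y ∧ TerminalIn (botSet T) y} =
      (fun p : P => (p : WithBot P)) '' {b | UpNbrIn T c b ∧ TerminalIn T b} := by
    intro c
    ext y
    simp only [Set.mem_setOf_eq, Set.mem_image]
    constructor
    · intro hy
      induction y with
      | bot => exact absurd hy.1 (not_upNbrIn_bot _ _)
      | coe b => exact ⟨b, ⟨upNbrIn_bot_coe.mp hy.1, terminalIn_bot_coe.mp hy.2⟩, rfl⟩
    · rintro ⟨b, ⟨h1, h2⟩, rfl⟩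
      exact ⟨upNbrIn_bot_coe.mpr h1, terminalIn_bot_coe.mpr h2⟩
  ext x
  induction x with
  | bot =>
      simp only [bot_mem_derStep _ (bot_mem_botSet T), bot_mem_botSet, iff_true]
  | coe a =>
      show _ ↔ (a : WithBot P) ∈ botSet (derStep T)
      rw [coe_mem_botSet]
      simp only [derStep, Set.mem_diff, Set.mem_setOf_eq, coe_mem_botSet]
      refine and_congr Iff.rfl (not_congr ?_)
      rw [terminalIn_bot_coe]
      refine and_congr Iff.rfl ?_
      constructor
      · rintro ⟨u, hu, hinf⟩
        induction u with
        | bot =>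
            exfalso
            refine hinf ?_
            have hsub : {y | UpNbrIn (botSet T) (⊥ : WithBot P) y ∧ TerminalIn (botSet T) y} ⊆
                (fun p : P => (p : WithBot P)) '' {m : P | (∀ z : P, ¬ z < m) ∧ ∀ p ∈ T, ¬ m < p} := by
              rintro y ⟨hy1, hy2⟩
              induction y with
              | bot => exact absurd hy1 (not_upNbrIn_bot _ _)
              | coe b =>
                  obtain ⟨hbT, hbmin⟩ := upNbrIn_bot_bot.mp hy1
                  have hbter := terminalIn_bot_coe.mp hy2
                  have hbismin : ∀ z : P, ¬ z < b := by
                    intro z hzb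
                    obtain ⟨m, hmb, hmmin⟩ := exists_min_le hfin b
                    rcases eq_or_lt_of_le hmb with rfl | hmb'
                    · exact hmmin z hzb
                    · exact hbmin m (hminT m hmmin) hmb'
                  exact ⟨b, ⟨hbismin, terminal_no_above hfin hbter⟩, rfl⟩
            exact ((hbad.image _).subset hsub)
        | coe c =>
            refine ⟨c, upNbrIn_bot_coe.mp hu, ?_⟩
            rw [hcoeset c] at hinf
            exact (Set.infinite_image_iff (WithBot.coe_injective.injOn)).mp hinf
      · rintro ⟨u, hu, hinf⟩
        refine ⟨(u : WithBot P), upNbrIn_bot_coe.mpr hu, ?_⟩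
        rw [hcoeset u]
        exact hinf.image (WithBot.coe_injective.injOn)

theorem derIter_bot (hfin : ∀ x : P, {y : P | y ≤ x}.Finite) {Λ : Ordinal}
    (H : ∀ σ < Λ, {m : P | (∀ z : P, ¬ z < m) ∧
      ∀ p ∈ derIter (univ : Set P) σ, ¬ m < p}.Finite) :
    ∀ ρ ≤ Λ, derIter (univ : Set (WithBot P)) ρ = botSet (derIter (univ : Set P) ρ) := by
  intro ρ
  induction ρ using Ordinal.induction with
  | h ρ ih =>
    intro hρΛ
    rcases zero_or_succ_or_limit_old ρ with h0 | ⟨δ, rfl⟩ | hl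
    · subst h0
      rw [derIter_zero, derIter_zero]
      ext x
      simp only [Set.mem_univ, true_iff]
      induction x with
      | bot => exact bot_mem_botSet _
      | coe a => exact coe_mem_botSet.mpr trivial
    · rw [← Ordinal.add_one_eq_succ] at *
      have hδ1 : δ < δ + 1 := by rw [Ordinal.add_one_eq_succ]; exact Order.lt_succ δ
      rw [derIter_succ, derIter_succ, ih δ hδ1 (le_trans hδ1.le hρΛ)]
      exact derStep_bot hfin (fun m hm => isMin_mem_derIter (Set.mem_univ m) hm δ)
        (H δ (lt_of_lt_of_le hδ1 hρΛ))
    · rw [derIter_limit _ hl, derIter_limit _ hl]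
      ext x
      constructor
      · intro hx
        induction x with
        | bot => exact bot_mem_botSet _
        | coe a =>
            refine coe_mem_botSet.mpr (Set.mem_iInter₂.mpr fun δ hδ => ?_)
            have := Set.mem_iInter₂.mp hx δ hδ
            rw [ih δ hδ (le_trans hδ.le hρΛ)] at this
            exact coe_mem_botSet.mp this
      · intro hx
        refine Set.mem_iInter₂.mpr fun δ hδ => ?_
        rw [ih δ hδ (le_trans hδ.le hρΛ)]
        induction x with
        | bot => exact bot_mem_botSet _
        | coe a =>
            refine coe_mem_botSet.mpr ?_
            exact Set.mem_iInter₂.mp (coe_mem_botSet.mp hx) δ hδ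

theorem derStep_bot_collapse (hT : T = {m : P | ∀ z : P, ¬ z < m}) (hinf : T.Infinite) :
    derStep (botSet T) = {(⊥ : WithBot P)} := by
  subst hT
  ext x
  simp only [Set.mem_singleton_iff]
  constructor
  · rintro ⟨hx, hndel⟩
    induction x with
    | bot => rfl
    | coe a =>
        exfalso
        apply hndel
        have haT : a ∈ {m : P | ∀ z : P, ¬ z < m} := coe_mem_botSet.mp hx
        have hterm : ∀ b : P, b ∈ {m : P | ∀ z : P, ¬ z < m} → ¬ (a : WithBot P) < b := by
          intro b hb hab
          exact hb a (WithBot.coe_lt_coe.mp hab)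
        have htermA : ∀ b : P, b ∈ {m : P | ∀ z : P, ¬ z < m} →
            TerminalIn (botSet {m : P | ∀ z : P, ¬ z < m}) (b : WithBot P) := by
          intro b hb
          refine ⟨coe_mem_botSet.mpr hb, fun y hy => ?_⟩
          induction y with
          | bot => exact not_upNbrIn_bot _ _ hy
          | coe c => exact (coe_mem_botSet.mp hy.2.1) b (WithBot.coe_lt_coe.mp hy.2.2.1)
        refine ⟨htermA a haT, ⊥, upNbrIn_bot_bot.mpr ⟨haT, fun z _ => haT z⟩, ?_⟩
        have hsub : (fun p : P => (p : WithBot P)) '' {m : P | ∀ z : P, ¬ z < m} ⊆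
            {y | UpNbrIn (botSet {m : P | ∀ z : P, ¬ z < m}) ⊥ y ∧
              TerminalIn (botSet {m : P | ∀ z : P, ¬ z < m}) y} := by
          rintro y ⟨b, hb, rfl⟩
          exact ⟨upNbrIn_bot_bot.mpr ⟨hb, fun z _ => hb z⟩, htermA b hb⟩
        exact ((hinf.image (WithBot.coe_injective.injOn)).mono hsub)
  · rintro rfl
    exact bot_mem_derStep _ (bot_mem_botSet _)

end Bot
section Helpers
variable {P Q : Type*} [PartialOrder P] [PartialOrder Q]
variable {ι : Type*} {W : ι → Type*} [∀ i, PartialOrder (W i)]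

theorem sigma_downfin (hfin : ∀ i, ∀ a : W i, {b : W i | b ≤ a}.Finite) (x : Σ i, W i) :
    {y : Σ i, W i | y ≤ x}.Finite := by
  obtain ⟨i, a⟩ := x
  refine ((hfin i a).image (Sigma.mk i)).subset ?_
  rintro ⟨j, c⟩ hy
  have hy' : (⟨j, c⟩ : Σ i, W i) ≤ ⟨i, a⟩ := hy
  obtain rfl : j = i := sigma_le_fst hy'
  exact ⟨c, (Sigma.le_def.mp hy').choose_spec, rfl⟩

theorem min_sigma {i : ι} {a : W i} :
    (∀ z : Σ i, W i, ¬ z < ⟨i, a⟩) ↔ (∀ z : W i, ¬ z < a) := by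
  constructor
  · exact fun h z hz => h ⟨i, z⟩ (Sigma.mk_lt_mk_iff.mpr hz)
  · rintro h ⟨j, c⟩ hz
    obtain rfl : j = i := sigma_lt_fst hz
    exact h c (Sigma.mk_lt_mk_iff.mp hz)

theorem min_iso (f : P ≃o Q) {x : P} :
    (∀ z : P, ¬ z < x) ↔ (∀ z : Q, ¬ z < f x) := by
  constructor
  · intro h z hz
    exact h (f.symm z) (by have := f.symm.lt_iff_lt.mpr hz; simpa using this)
  · intro h z hz
    exact h (f z) (f.lt_iff_lt.mpr hz)

theorem bot_eq_of_min {b m : P} (hb : ∀ x, b ≤ x) (hm : ∀ z : P, ¬ z < m) : m = b :=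
  ((eq_or_lt_of_le (hb m)).resolve_right (hm b)).symm

end Helpers
section Helpers2
variable {ι : Type*} {W : ι → Type*} [∀ i, PartialOrder (W i)]

theorem covBy_mk_iff {i : ι} {a b : W i} :
    (⟨i, a⟩ : Σ i, W i) ⋖ ⟨i, b⟩ ↔ a ⋖ b := by
  constructor
  · rintro ⟨hlt, hbet⟩
    refine ⟨Sigma.mk_lt_mk_iff.mp hlt, fun c hac hcb => ?_⟩
    exact hbet (c := (⟨i, c⟩ : Σ i, W i)) (Sigma.mk_lt_mk_iff.mpr hac) (Sigma.mk_lt_mk_iff.mpr hcb)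
  · rintro ⟨hlt, hbet⟩
    refine ⟨Sigma.mk_lt_mk_iff.mpr hlt, fun c hac hcb => ?_⟩
    obtain ⟨j, cc⟩ := c
    obtain rfl : i = j := sigma_lt_fst hac
    exact hbet (Sigma.mk_lt_mk_iff.mp hac) (Sigma.mk_lt_mk_iff.mp hcb)

end Helpers2
section Family
variable (V : Ordinal → Type) [∀ γ : Ordinal, PartialOrder (V γ)]
variable (seq : Ordinal → ℕ → Ordinal)
variable (hV0 : ∀ x y : V 0, x = y) (hV0ne : Nonempty (V 0))
variable (hchainfin : ∀ γ : Ordinal, γ.card ≤ Cardinal.aleph0 → ∀ x : V γ, {y : V γ | y ≤ x}.Finite)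
variable (hseqmono : ∀ γ : Ordinal, γ.card ≤ Cardinal.aleph0 → Order.IsSuccLimit γ → StrictMono (seq γ))
variable (hseqsucc : ∀ γ : Ordinal, γ.card ≤ Cardinal.aleph0 → Order.IsSuccLimit γ →
      ∀ n : ℕ, ∃ δ : Ordinal, seq γ n = δ + 1)
variable (hseqlt : ∀ γ : Ordinal, γ.card ≤ Cardinal.aleph0 → Order.IsSuccLimit γ → ∀ n : ℕ, seq γ n < γ)
variable (hseqcof : ∀ γ : Ordinal, γ.card ≤ Cardinal.aleph0 → Order.IsSuccLimit γ →
      ∀ δ : Ordinal, δ < γ → ∃ n : ℕ, δ < seq γ n)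
variable (hsucc : ∀ γ : Ordinal, γ.card ≤ Cardinal.aleph0 → (γ = 0 ∨ ∃ δ : Ordinal, γ = δ + 1) →
      Nonempty (V (γ + 1) ≃o WithBot (Σ _ : ℕ, V γ)))
variable (hlimsucc : ∀ γ : Ordinal, γ.card ≤ Cardinal.aleph0 → Order.IsSuccLimit γ →
      Nonempty (V (γ + 1) ≃o WithBot (V γ)))
variable (hlim : ∀ γ : Ordinal, γ.card ≤ Cardinal.aleph0 → Order.IsSuccLimit γ →
      Nonempty (V γ ≃o (Σ n : ℕ, V (seq γ n))))

theorem ord_lt_succ (δ : Ordinal) : δ < δ + 1 := by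
  rw [Ordinal.add_one_eq_succ]; exact Order.lt_succ δ

include hsucc hlimsucc in
theorem exists_bot_succ (δ : Ordinal) (hc : δ.card ≤ Cardinal.aleph0) :
    ∃ b : V (δ + 1), ∀ x, b ≤ x := by
  rcases zero_or_succ_or_limit_old δ with h0 | ⟨a, ha⟩ | hl
  · obtain ⟨f⟩ := hsucc δ hc (Or.inl h0)
    exact ⟨f.symm ⊥, fun x => by
      have := f.symm.le_iff_le.mpr (bot_le (a := f x)); simpa using this⟩
  · obtain ⟨f⟩ := hsucc δ hc (Or.inr ⟨a, by rw [ha, Ordinal.add_one_eq_succ]⟩)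
    exact ⟨f.symm ⊥, fun x => by
      have := f.symm.le_iff_le.mpr (bot_le (a := f x)); simpa using this⟩
  · obtain ⟨f⟩ := hlimsucc δ hc hl
    exact ⟨f.symm ⊥, fun x => by
      have := f.symm.le_iff_le.mpr (bot_le (a := f x)); simpa using this⟩

include hV0 hV0ne hchainfin hseqmono hseqsucc hseqlt hseqcof hsucc hlimsucc hlim in
theorem master : ∀ γ : Ordinal, γ.card ≤ Cardinal.aleph0 →
    (Nonempty (V γ)) ∧
    (∀ x ∈ derIter (univ : Set (V γ)) γ, ∀ z : V γ, ¬ z < x) ∧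
    (∀ ρ < γ, ∃ x ∈ derIter (univ : Set (V γ)) ρ, ∃ z : V γ, z < x) ∧
    (∀ x : V γ, ∃ m : V γ, x ≤ m ∧ ∀ z : V γ, ¬ m < z) := by
  intro γ
  induction γ using Ordinal.induction with
  | h γ ih =>
  intro hγ
  rcases zero_or_succ_or_limit_old γ with h0 | ⟨δ', hδ'⟩ | hl
  · -- γ = 0
    subst h0
    refine ⟨hV0ne, ?_, ?_, ?_⟩
    · intro x _ z hz; exact absurd (hV0 z x) (ne_of_lt hz)
    · intro ρ hρ; exact absurd hρ (by simp : ¬ ρ < 0)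
    · intro x; exact ⟨x, le_rfl, fun z hz => absurd (hV0 x z) (ne_of_lt hz)⟩
  · -- γ = δ + 1
    rw [← Ordinal.add_one_eq_succ] at hδ'
    obtain ⟨δ, rfl⟩ : ∃ δ, γ = δ + 1 := ⟨δ', hδ'⟩
    have hδlt : δ < δ + 1 := ord_lt_succ δ
    have hδc : δ.card ≤ Cardinal.aleph0 := le_trans (Ordinal.card_le_card hδlt.le) hγ
    have hfinδ : ∀ x : V δ, {y : V δ | y ≤ x}.Finite := hchainfin δ hδc
    obtain ⟨ihne, ihw1, ihw2, ihw3⟩ := ih δ hδlt hδc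
    by_cases hdl : Order.IsSuccLimit δ
    · -- δ limit : V (δ+1) ≃o WithBot (V δ)
      obtain ⟨f⟩ := hlimsucc δ hδc hdl
      obtain ⟨g⟩ := hlim δ hδc hdl
      have hcompc : ∀ n : ℕ, (seq δ n).card ≤ Cardinal.aleph0 :=
        fun n => le_trans (Ordinal.card_le_card (hseqlt δ hδc hdl n).le) hδc
      have ihcomp := fun n : ℕ => ih (seq δ n) (lt_trans (hseqlt δ hδc hdl n) hδlt) (hcompc n)
      have hbn : ∀ n : ℕ, ∃ b : V (seq δ n), ∀ x, b ≤ x := by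
        intro n
        obtain ⟨a, ha⟩ := hseqsucc δ hδc hdl n
        rw [ha]
        refine exists_bot_succ V hsucc hlimsucc a ?_
        have : a < seq δ n := by rw [ha]; exact ord_lt_succ a
        exact le_trans (Ordinal.card_le_card this.le) (hcompc n)
      choose b hb using hbn
      have hminmem : ∀ n : ℕ, ∀ z : V δ, ¬ z < g.symm ⟨n, b n⟩ := by
        intro n
        rw [min_iso g]
        simp only [OrderIso.apply_symm_apply]
        exact min_sigma.mpr (fun z hz => absurd (hb n z) (not_le_of_gt hz))
      have hmemtrans : ∀ (ρ : Ordinal) (n : ℕ) (x : V (seq δ n)),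
          g.symm ⟨n, x⟩ ∈ derIter (univ : Set (V δ)) ρ ↔
            x ∈ derIter (univ : Set (V (seq δ n))) ρ := by
        intro ρ n x
        rw [derIter_iso_mem g ρ, OrderIso.apply_symm_apply, derIter_sigma ρ]
        exact Iff.rfl
      have hH : ∀ σ < δ, {m : V δ | (∀ z, ¬ z < m) ∧
          ∀ p ∈ derIter (univ : Set (V δ)) σ, ¬ m < p}.Finite := by
        intro σ hσ
        obtain ⟨n₀, hn₀⟩ := hseqcof δ hδc hdl σ hσ
        refine Set.Finite.subset
          (Set.Finite.image (fun n => g.symm ⟨n, b n⟩) (Set.finite_Iio n₀)) ?_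
        rintro m ⟨hmin, habove⟩
        have hgm : ∀ z, ¬ z < g m := (min_iso g).mp hmin
        rcases hgmeq : g m with ⟨n, a⟩
        rw [hgmeq] at hgm
        have hamin : ∀ z, ¬ z < a := (min_sigma (W := fun n => V (seq δ n))).mp hgm
        have hab : a = b n := bot_eq_of_min (hb n) hamin
        have hmeq : m = g.symm ⟨n, b n⟩ := by
          rw [← hab, ← hgmeq, OrderIso.symm_apply_apply]
        have hnlt : n < n₀ := by
          by_contra hn
          push_neg at hn
          have hσn : σ < seq δ n :=
            lt_of_lt_of_le hn₀ ((hseqmono δ hδc hdl).monotone hn)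
          obtain ⟨x, hxS, z, hzx⟩ := (ihcomp n).2.2.1 σ hσn
          have hax : a < x := by
            refine lt_of_le_of_ne (hab ▸ hb n x) ?_
            intro hax
            exact hamin z (by rw [hax]; exact hzx)
          refine habove (g.symm ⟨n, x⟩) ((hmemtrans σ n x).mpr hxS) ?_
          rw [hmeq, ← hab]
          exact g.symm.lt_iff_lt.mpr (Sigma.mk_lt_mk_iff.mpr hax)
        exact ⟨n, hnlt, hmeq.symm⟩
      have LOC := derIter_bot hfinδ hH
      have hSδ : derIter (univ : Set (V δ)) δ = {m : V δ | ∀ z, ¬ z < m} := by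
        ext m
        exact ⟨fun h => ihw1 m h, fun h => isMin_mem_derIter (mem_univ m) h δ⟩
      have hinf : {m : V δ | ∀ z, ¬ z < m}.Infinite := by
        refine Set.infinite_of_injective_forall_mem (f := fun n : ℕ => g.symm ⟨n, b n⟩) ?_ ?_
        · intro n1 n2 h
          have := congrArg g h
          simp only [OrderIso.apply_symm_apply] at this
          exact congrArg Sigma.fst this
        · exact hminmem
      have hcol : derIter (univ : Set (WithBot (V δ))) (δ + 1) = {⊥} := by
        rw [derIter_succ, LOC δ le_rfl, hSδ]
        exact derStep_bot_collapse rfl hinf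
      refine ⟨⟨f.symm ⊥⟩, ?_, ?_, ?_⟩
      · intro x hx z hz
        have hfx := (derIter_iso_mem f _ x).mp hx
        rw [hcol] at hfx
        have hlt : f z < f x := f.lt_iff_lt.mpr hz
        rw [Set.mem_singleton_iff.mp hfx] at hlt
        exact not_lt_bot hlt
      · intro ρ hρ
        have hρδ : ρ ≤ δ := by
          rw [Ordinal.add_one_eq_succ] at hρ; exact Order.lt_succ_iff.mp hρ
        have hmem : g.symm ⟨0, b 0⟩ ∈ derIter (univ : Set (V δ)) ρ :=
          isMin_mem_derIter (mem_univ _) (hminmem 0) ρ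
        have hmem2 : ((g.symm ⟨0, b 0⟩ : V δ) : WithBot (V δ)) ∈
            derIter (univ : Set (WithBot (V δ))) ρ := by
          rw [LOC ρ hρδ]; exact Or.inr ⟨_, hmem, rfl⟩
        refine ⟨f.symm ((g.symm ⟨0, b 0⟩ : V δ) : WithBot (V δ)), ?_, f.symm ⊥, ?_⟩
        · rw [derIter_iso_mem f ρ, OrderIso.apply_symm_apply]; exact hmem2
        · exact f.symm.lt_iff_lt.mpr (WithBot.bot_lt_coe _)
      · intro x
        have hmax : ∀ p : V δ, ∃ m : V (δ + 1), (p : WithBot (V δ)) ≤ f m ∧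
            ∀ z : V (δ + 1), ¬ m < z := by
          intro p
          obtain ⟨mt, hpmt, hmtmax⟩ := ihw3 p
          refine ⟨f.symm ((mt : WithBot (V δ))), ?_, ?_⟩
          · rw [OrderIso.apply_symm_apply]
            exact WithBot.coe_le_coe.mpr hpmt
          · intro z hz
            have h2 : ((mt : WithBot (V δ))) < f z := by
              have := f.lt_iff_lt.mpr hz
              rwa [OrderIso.apply_symm_apply] at this
            rcases hfz : f z with _ | c
            · rw [hfz] at h2; exact not_lt_bot h2
            · rw [hfz] at h2
              exact hmtmax c (WithBot.coe_lt_coe.mp h2)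
        rcases hfx : f x with _ | p
        · obtain ⟨m, _, hmmax⟩ := hmax ihne.some
          refine ⟨m, ?_, hmmax⟩
          have : f x ≤ f m := by rw [hfx]; exact bot_le
          exact f.le_iff_le.mp this
        · obtain ⟨m, hpm, hmmax⟩ := hmax p
          refine ⟨m, ?_, hmmax⟩
          have : f x ≤ f m := by rw [hfx]; exact hpm
          exact f.le_iff_le.mp this
    · -- δ = 0 or successor : V (δ+1) ≃o WithBot (Σ _ : ℕ, V δ)
      have hcase : δ = 0 ∨ ∃ a : Ordinal, δ = a + 1 := by
        rcases zero_or_succ_or_limit_old δ with h | ⟨a, ha⟩ | h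
        · exact Or.inl h
        · exact Or.inr ⟨a, by rw [ha, Ordinal.add_one_eq_succ]⟩
        · exact absurd h hdl
      obtain ⟨f⟩ := hsucc δ hδc hcase
      have hfinP : ∀ x : (Σ _ : ℕ, V δ), {y | y ≤ x}.Finite :=
        sigma_downfin (fun _ => hfinδ)
      obtain ⟨m₀, -, hm₀⟩ := exists_min_le hfinδ ihne.some
      have hH : ∀ σ < δ, {m : Σ _ : ℕ, V δ | (∀ z, ¬ z < m) ∧
          ∀ p ∈ derIter (univ : Set (Σ _ : ℕ, V δ)) σ, ¬ m < p}.Finite := by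
        intro σ hσ
        rcases hcase with h0 | ⟨a, ha⟩
        · rw [h0] at hσ; exact absurd hσ (by simp : ¬ σ < 0)
        · obtain ⟨bb, hbb⟩ : ∃ bb : V δ, ∀ x, bb ≤ x := by
            rw [ha]
            refine exists_bot_succ V hsucc hlimsucc a ?_
            exact le_trans (Ordinal.card_le_card (by rw [ha]; exact (ord_lt_succ a).le)) hδc
          refine Set.Finite.subset Set.finite_empty ?_
          rintro ⟨n, c⟩ ⟨hmin, habove⟩
          exfalso
          have hcmin : ∀ z : V δ, ¬ z < c := (min_sigma (W := fun _ : ℕ => V δ)).mp hmin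
          obtain ⟨x, hxS, z, hzx⟩ := ihw2 σ hσ
          have hcb : c = bb := bot_eq_of_min hbb hcmin
          have hcx : c < x := by
            refine lt_of_le_of_ne (le_trans (le_of_eq hcb) (hbb x)) ?_
            intro hcex
            exact hcmin z (by rw [hcex]; exact hzx)
          refine habove ⟨n, x⟩ ?_ (Sigma.mk_lt_mk_iff.mpr hcx)
          rw [derIter_sigma σ]
          exact hxS
      have LOC := derIter_bot hfinP hH
      have hSδP : derIter (univ : Set (Σ _ : ℕ, V δ)) δ =
          {m : Σ _ : ℕ, V δ | ∀ z, ¬ z < m} := by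
        ext ⟨n, a⟩
        rw [derIter_sigma δ]
        constructor
        · intro h
          exact (min_sigma (W := fun _ : ℕ => V δ)).mpr (ihw1 a h)
        · intro h
          exact isMin_mem_derIter (mem_univ a)
            ((min_sigma (W := fun _ : ℕ => V δ)).mp
              (h : ∀ z, ¬ z < (⟨n, a⟩ : Σ _ : ℕ, V δ))) δ
      have hinf : {m : Σ _ : ℕ, V δ | ∀ z, ¬ z < m}.Infinite := by
        refine Set.infinite_of_injective_forall_mem
          (f := fun n : ℕ => (⟨n, m₀⟩ : Σ _ : ℕ, V δ)) ?_ ?_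
        · intro n1 n2 h
          exact congrArg Sigma.fst h
        · intro n
          exact (min_sigma (W := fun _ : ℕ => V δ)).mpr hm₀
      have hcol : derIter (univ : Set (WithBot (Σ _ : ℕ, V δ))) (δ + 1) = {⊥} := by
        rw [derIter_succ, LOC δ le_rfl, hSδP]
        exact derStep_bot_collapse rfl hinf
      refine ⟨⟨f.symm ⊥⟩, ?_, ?_, ?_⟩
      · intro x hx z hz
        have hfx := (derIter_iso_mem f _ x).mp hx
        rw [hcol] at hfx
        have hlt : f z < f x := f.lt_iff_lt.mpr hz
        rw [Set.mem_singleton_iff.mp hfx] at hlt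
        exact not_lt_bot hlt
      · intro ρ hρ
        have hρδ : ρ ≤ δ := by
          rw [Ordinal.add_one_eq_succ] at hρ; exact Order.lt_succ_iff.mp hρ
        have hmem : (⟨0, m₀⟩ : Σ _ : ℕ, V δ) ∈ derIter univ ρ :=
          isMin_mem_derIter (mem_univ (⟨0, m₀⟩ : Σ _ : ℕ, V δ)) ((min_sigma (W := fun _ : ℕ => V δ)).mpr hm₀) ρ
        have hmem2 : ((⟨0, m₀⟩ : Σ _ : ℕ, V δ) : WithBot (Σ _ : ℕ, V δ)) ∈
            derIter (univ : Set (WithBot (Σ _ : ℕ, V δ))) ρ := by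
          rw [LOC ρ hρδ]; exact Or.inr ⟨_, hmem, rfl⟩
        refine ⟨f.symm (((⟨0, m₀⟩ : Σ _ : ℕ, V δ)) : WithBot (Σ _ : ℕ, V δ)), ?_, f.symm ⊥, ?_⟩
        · rw [derIter_iso_mem f ρ, OrderIso.apply_symm_apply]; exact hmem2
        · exact f.symm.lt_iff_lt.mpr (WithBot.bot_lt_coe _)
      · intro x
        have hmax : ∀ p : Σ _ : ℕ, V δ, ∃ m : V (δ + 1),
            ((p : WithBot (Σ _ : ℕ, V δ))) ≤ f m ∧ ∀ z : V (δ + 1), ¬ m < z := by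
          rintro ⟨n, a⟩
          obtain ⟨mt, hpmt, hmtmax⟩ := ihw3 a
          refine ⟨f.symm (((⟨n, mt⟩ : Σ _ : ℕ, V δ)) : WithBot (Σ _ : ℕ, V δ)), ?_, ?_⟩
          · rw [OrderIso.apply_symm_apply]
            exact WithBot.coe_le_coe.mpr (Sigma.le_def.mpr ⟨rfl, hpmt⟩)
          · intro z hz
            have h2 : (((⟨n, mt⟩ : Σ _ : ℕ, V δ)) : WithBot (Σ _ : ℕ, V δ)) < f z := by
              have := f.lt_iff_lt.mpr hz
              rwa [OrderIso.apply_symm_apply] at this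
            rcases hfz : f z with _ | c
            · rw [hfz] at h2; exact not_lt_bot h2
            · rw [hfz] at h2
              have h3 := WithBot.coe_lt_coe.mp h2
              rcases c with ⟨k, cc⟩
              have hk : n = k := sigma_lt_fst h3
              subst hk
              exact hmtmax cc ((Sigma.mk_lt_mk_iff (α := fun _ : ℕ => V δ)).mp h3)
        rcases hfx : f x with _ | p
        · obtain ⟨m, _, hmmax⟩ := hmax ⟨0, ihne.some⟩
          refine ⟨m, ?_, hmmax⟩
          exact f.le_iff_le.mp (by rw [hfx]; exact bot_le)
        · obtain ⟨m, hpm, hmmax⟩ := hmax p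
          refine ⟨m, ?_, hmmax⟩
          exact f.le_iff_le.mp (by rw [hfx]; exact hpm)
  · -- γ limit
    obtain ⟨g⟩ := hlim γ hγ hl
    have hcompc : ∀ n : ℕ, (seq γ n).card ≤ Cardinal.aleph0 :=
      fun n => le_trans (Ordinal.card_le_card (hseqlt γ hγ hl n).le) hγ
    have ihcomp := fun n : ℕ => ih (seq γ n) (hseqlt γ hγ hl n) (hcompc n)
    have hmemtrans : ∀ (ρ : Ordinal) (n : ℕ) (x : V (seq γ n)),
        g.symm ⟨n, x⟩ ∈ derIter (univ : Set (V γ)) ρ ↔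
          x ∈ derIter (univ : Set (V (seq γ n))) ρ := by
      intro ρ n x
      rw [derIter_iso_mem g ρ, OrderIso.apply_symm_apply, derIter_sigma ρ]
      exact Iff.rfl
    refine ⟨⟨g.symm ⟨0, (ihcomp 0).1.some⟩⟩, ?_, ?_, ?_⟩
    · intro x hx z hz
      have hgx := (derIter_iso_mem g γ x).mp hx
      rcases hgxeq : g x with ⟨n, a⟩
      rw [hgxeq, derIter_sigma γ] at hgx
      have haS : a ∈ derIter (univ : Set (V (seq γ n))) (seq γ n) :=
        derIter_antitone _ (hseqlt γ hγ hl n).le hgx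
      have hamin := (ihcomp n).2.1 a haS
      have hzx : g z < g x := g.lt_iff_lt.mpr hz
      rw [hgxeq] at hzx
      rcases hgzeq : g z with ⟨n', c⟩
      rw [hgzeq] at hzx
      have : n' = n := sigma_lt_fst hzx
      subst this
      exact hamin c ((Sigma.mk_lt_mk_iff (α := fun n => V (seq γ n))).mp hzx)
    · intro ρ hρ
      obtain ⟨n, hn⟩ := hseqcof γ hγ hl ρ hρ
      obtain ⟨x, hxS, z, hzx⟩ := (ihcomp n).2.2.1 ρ hn
      refine ⟨g.symm ⟨n, x⟩, (hmemtrans ρ n x).mpr hxS, g.symm ⟨n, z⟩, ?_⟩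
      exact g.symm.lt_iff_lt.mpr (Sigma.mk_lt_mk_iff.mpr hzx)
    · intro x
      rcases hgxeq : g x with ⟨n, a⟩
      obtain ⟨mt, hamt, hmtmax⟩ := (ihcomp n).2.2.2 a
      refine ⟨g.symm ⟨n, mt⟩, ?_, ?_⟩
      · refine g.le_iff_le.mp ?_
        rw [OrderIso.apply_symm_apply, hgxeq]
        exact Sigma.le_def.mpr ⟨rfl, hamt⟩
      · intro z hz
        have h2 : (⟨n, mt⟩ : Σ n, V (seq γ n)) < g z := by
          have := g.lt_iff_lt.mpr hz
          rwa [OrderIso.apply_symm_apply] at this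
        rcases hgzeq : g z with ⟨k, c⟩
        rw [hgzeq] at h2
        have hk : n = k := sigma_lt_fst h2
        subst hk
        exact hmtmax c ((Sigma.mk_lt_mk_iff (α := fun n => V (seq γ n))).mp h2)

end Family
section Family2
variable (V : Ordinal → Type) [∀ γ : Ordinal, PartialOrder (V γ)]
variable (seq : Ordinal → ℕ → Ordinal)
variable (hV0 : ∀ x y : V 0, x = y) (hV0ne : Nonempty (V 0))
variable (hchainfin : ∀ γ : Ordinal, γ.card ≤ Cardinal.aleph0 → ∀ x : V γ, {y : V γ | y ≤ x}.Finite)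
variable (hseqmono : ∀ γ : Ordinal, γ.card ≤ Cardinal.aleph0 → Order.IsSuccLimit γ → StrictMono (seq γ))
variable (hseqsucc : ∀ γ : Ordinal, γ.card ≤ Cardinal.aleph0 → Order.IsSuccLimit γ →
      ∀ n : ℕ, ∃ δ : Ordinal, seq γ n = δ + 1)
variable (hseqlt : ∀ γ : Ordinal, γ.card ≤ Cardinal.aleph0 → Order.IsSuccLimit γ → ∀ n : ℕ, seq γ n < γ)
variable (hseqcof : ∀ γ : Ordinal, γ.card ≤ Cardinal.aleph0 → Order.IsSuccLimit γ →
      ∀ δ : Ordinal, δ < γ → ∃ n : ℕ, δ < seq γ n)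
variable (hsucc : ∀ γ : Ordinal, γ.card ≤ Cardinal.aleph0 → (γ = 0 ∨ ∃ δ : Ordinal, γ = δ + 1) →
      Nonempty (V (γ + 1) ≃o WithBot (Σ _ : ℕ, V γ)))
variable (hlimsucc : ∀ γ : Ordinal, γ.card ≤ Cardinal.aleph0 → Order.IsSuccLimit γ →
      Nonempty (V (γ + 1) ≃o WithBot (V γ)))
variable (hlim : ∀ γ : Ordinal, γ.card ≤ Cardinal.aleph0 → Order.IsSuccLimit γ →
      Nonempty (V γ ≃o (Σ n : ℕ, V (seq γ n))))

include hV0 hV0ne hchainfin hseqmono hseqsucc hseqlt hseqcof hsucc hlimsucc hlim in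
theorem locA (δ : Ordinal) (hδc : δ.card ≤ Cardinal.aleph0)
    (hcase : δ = 0 ∨ ∃ a : Ordinal, δ = a + 1) :
    (∀ ρ ≤ δ, derIter (univ : Set (WithBot (Σ _ : ℕ, V δ))) ρ =
      botSet (derIter (univ : Set (Σ _ : ℕ, V δ)) ρ)) ∧
    derIter (univ : Set (WithBot (Σ _ : ℕ, V δ))) (δ + 1) = {⊥} := by
  obtain ⟨mne, mw1, mw2, mw3⟩ := master V seq hV0 hV0ne hchainfin hseqmono hseqsucc hseqlt
    hseqcof hsucc hlimsucc hlim δ hδc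
  have hfinδ : ∀ x : V δ, {y : V δ | y ≤ x}.Finite := hchainfin δ hδc
  have hfinP : ∀ x : (Σ _ : ℕ, V δ), {y | y ≤ x}.Finite := sigma_downfin (fun _ => hfinδ)
  obtain ⟨m₀, -, hm₀⟩ := exists_min_le hfinδ mne.some
  have hH : ∀ σ < δ, {m : Σ _ : ℕ, V δ | (∀ z, ¬ z < m) ∧
      ∀ p ∈ derIter (univ : Set (Σ _ : ℕ, V δ)) σ, ¬ m < p}.Finite := by
    intro σ hσ
    rcases hcase with h0 | ⟨a, ha⟩
    · rw [h0] at hσ; exact absurd hσ (by simp : ¬ σ < 0)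
    · obtain ⟨bb, hbb⟩ : ∃ bb : V δ, ∀ x, bb ≤ x := by
        rw [ha]
        refine exists_bot_succ V hsucc hlimsucc a ?_
        exact le_trans (Ordinal.card_le_card (by rw [ha]; exact (ord_lt_succ a).le)) hδc
      refine Set.Finite.subset Set.finite_empty ?_
      rintro ⟨n, c⟩ ⟨hmin, habove⟩
      exfalso
      have hcmin : ∀ z : V δ, ¬ z < c := (min_sigma (W := fun _ : ℕ => V δ)).mp hmin
      obtain ⟨x, hxS, z, hzx⟩ := mw2 σ hσ
      have hcb : c = bb := bot_eq_of_min hbb hcmin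
      have hcx : c < x := by
        refine lt_of_le_of_ne (le_trans (le_of_eq hcb) (hbb x)) ?_
        intro hcex
        exact hcmin z (by rw [hcex]; exact hzx)
      refine habove ⟨n, x⟩ ?_ (Sigma.mk_lt_mk_iff.mpr hcx)
      rw [derIter_sigma σ]
      exact hxS
  have LOC := derIter_bot hfinP hH
  have hSδP : derIter (univ : Set (Σ _ : ℕ, V δ)) δ =
      {m : Σ _ : ℕ, V δ | ∀ z, ¬ z < m} := by
    ext ⟨n, a⟩
    rw [derIter_sigma δ]
    constructor
    · intro h
      exact (min_sigma (W := fun _ : ℕ => V δ)).mpr (mw1 a h)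
    · intro h
      exact isMin_mem_derIter (mem_univ a)
        ((min_sigma (W := fun _ : ℕ => V δ)).mp
          (h : ∀ z, ¬ z < (⟨n, a⟩ : Σ _ : ℕ, V δ))) δ
  have hinf : {m : Σ _ : ℕ, V δ | ∀ z, ¬ z < m}.Infinite := by
    refine Set.infinite_of_injective_forall_mem
      (f := fun n : ℕ => (⟨n, m₀⟩ : Σ _ : ℕ, V δ)) ?_ ?_
    · intro n1 n2 h
      exact congrArg Sigma.fst h
    · intro n
      exact (min_sigma (W := fun _ : ℕ => V δ)).mpr hm₀
  refine ⟨LOC, ?_⟩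
  rw [derIter_succ, LOC δ le_rfl, hSδP]
  exact derStep_bot_collapse rfl hinf

include hV0 hV0ne hchainfin hseqmono hseqsucc hseqlt hseqcof hsucc hlimsucc hlim in
theorem locB (δ : Ordinal) (hδc : δ.card ≤ Cardinal.aleph0) (hdl : Order.IsSuccLimit δ) :
    (∀ ρ ≤ δ, derIter (univ : Set (WithBot (V δ))) ρ =
      botSet (derIter (univ : Set (V δ)) ρ)) ∧
    derIter (univ : Set (WithBot (V δ))) (δ + 1) = {⊥} := by
  obtain ⟨mne, mw1, mw2, mw3⟩ := master V seq hV0 hV0ne hchainfin hseqmono hseqsucc hseqlt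
    hseqcof hsucc hlimsucc hlim δ hδc
  have hfinδ : ∀ x : V δ, {y : V δ | y ≤ x}.Finite := hchainfin δ hδc
  obtain ⟨g⟩ := hlim δ hδc hdl
  have hcompc : ∀ n : ℕ, (seq δ n).card ≤ Cardinal.aleph0 :=
    fun n => le_trans (Ordinal.card_le_card (hseqlt δ hδc hdl n).le) hδc
  have mcomp := fun n : ℕ => master V seq hV0 hV0ne hchainfin hseqmono hseqsucc hseqlt
    hseqcof hsucc hlimsucc hlim (seq δ n) (hcompc n)
  have hbn : ∀ n : ℕ, ∃ b : V (seq δ n), ∀ x, b ≤ x := by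
    intro n
    obtain ⟨a, ha⟩ := hseqsucc δ hδc hdl n
    rw [ha]
    refine exists_bot_succ V hsucc hlimsucc a ?_
    have : a < seq δ n := by rw [ha]; exact ord_lt_succ a
    exact le_trans (Ordinal.card_le_card this.le) (hcompc n)
  choose b hb using hbn
  have hminmem : ∀ n : ℕ, ∀ z : V δ, ¬ z < g.symm ⟨n, b n⟩ := by
    intro n
    rw [min_iso g]
    simp only [OrderIso.apply_symm_apply]
    exact min_sigma.mpr (fun z hz => absurd (hb n z) (not_le_of_gt hz))
  have hmemtrans : ∀ (ρ : Ordinal) (n : ℕ) (x : V (seq δ n)),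
      g.symm ⟨n, x⟩ ∈ derIter (univ : Set (V δ)) ρ ↔
        x ∈ derIter (univ : Set (V (seq δ n))) ρ := by
    intro ρ n x
    rw [derIter_iso_mem g ρ, OrderIso.apply_symm_apply, derIter_sigma ρ]
    exact Iff.rfl
  have hH : ∀ σ < δ, {m : V δ | (∀ z, ¬ z < m) ∧
      ∀ p ∈ derIter (univ : Set (V δ)) σ, ¬ m < p}.Finite := by
    intro σ hσ
    obtain ⟨n₀, hn₀⟩ := hseqcof δ hδc hdl σ hσ
    refine Set.Finite.subset
      (Set.Finite.image (fun n => g.symm ⟨n, b n⟩) (Set.finite_Iio n₀)) ?_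
    rintro m ⟨hmin, habove⟩
    have hgm : ∀ z, ¬ z < g m := (min_iso g).mp hmin
    rcases hgmeq : g m with ⟨n, a⟩
    rw [hgmeq] at hgm
    have hamin : ∀ z, ¬ z < a := (min_sigma (W := fun n => V (seq δ n))).mp hgm
    have hab : a = b n := bot_eq_of_min (hb n) hamin
    have hmeq : m = g.symm ⟨n, b n⟩ := by
      rw [← hab, ← hgmeq, OrderIso.symm_apply_apply]
    have hnlt : n < n₀ := by
      by_contra hn
      push_neg at hn
      have hσn : σ < seq δ n :=
        lt_of_lt_of_le hn₀ ((hseqmono δ hδc hdl).monotone hn)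
      obtain ⟨x, hxS, z, hzx⟩ := (mcomp n).2.2.1 σ hσn
      have hax : a < x := by
        refine lt_of_le_of_ne (hab ▸ hb n x) ?_
        intro hax
        exact hamin z (by rw [hax]; exact hzx)
      refine habove (g.symm ⟨n, x⟩) ((hmemtrans σ n x).mpr hxS) ?_
      rw [hmeq, ← hab]
      exact g.symm.lt_iff_lt.mpr (Sigma.mk_lt_mk_iff.mpr hax)
    exact ⟨n, hnlt, hmeq.symm⟩
  have LOC := derIter_bot hfinδ hH
  have hSδ : derIter (univ : Set (V δ)) δ = {m : V δ | ∀ z, ¬ z < m} := by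
    ext m
    exact ⟨fun h => mw1 m h, fun h => isMin_mem_derIter (mem_univ m) h δ⟩
  have hinf : {m : V δ | ∀ z, ¬ z < m}.Infinite := by
    refine Set.infinite_of_injective_forall_mem (f := fun n : ℕ => g.symm ⟨n, b n⟩) ?_ ?_
    · intro n1 n2 h
      have := congrArg g h
      simp only [OrderIso.apply_symm_apply] at this
      exact congrArg Sigma.fst this
    · exact hminmem
  refine ⟨LOC, ?_⟩
  rw [derIter_succ, LOC δ le_rfl, hSδ]
  exact derStep_bot_collapse rfl hinf

end Family2
section Family3
variable (V : Ordinal → Type) [∀ γ : Ordinal, PartialOrder (V γ)]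
variable (seq : Ordinal → ℕ → Ordinal)
variable (hV0 : ∀ x y : V 0, x = y) (hV0ne : Nonempty (V 0))
variable (hchainfin : ∀ γ : Ordinal, γ.card ≤ Cardinal.aleph0 → ∀ x : V γ, {y : V γ | y ≤ x}.Finite)
variable (hseqmono : ∀ γ : Ordinal, γ.card ≤ Cardinal.aleph0 → Order.IsSuccLimit γ → StrictMono (seq γ))
variable (hseqsucc : ∀ γ : Ordinal, γ.card ≤ Cardinal.aleph0 → Order.IsSuccLimit γ →
      ∀ n : ℕ, ∃ δ : Ordinal, seq γ n = δ + 1)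
variable (hseqlt : ∀ γ : Ordinal, γ.card ≤ Cardinal.aleph0 → Order.IsSuccLimit γ → ∀ n : ℕ, seq γ n < γ)
variable (hseqcof : ∀ γ : Ordinal, γ.card ≤ Cardinal.aleph0 → Order.IsSuccLimit γ →
      ∀ δ : Ordinal, δ < γ → ∃ n : ℕ, δ < seq γ n)
variable (hsucc : ∀ γ : Ordinal, γ.card ≤ Cardinal.aleph0 → (γ = 0 ∨ ∃ δ : Ordinal, γ = δ + 1) →
      Nonempty (V (γ + 1) ≃o WithBot (Σ _ : ℕ, V γ)))
variable (hlimsucc : ∀ γ : Ordinal, γ.card ≤ Cardinal.aleph0 → Order.IsSuccLimit γ →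
      Nonempty (V (γ + 1) ≃o WithBot (V γ)))
variable (hlim : ∀ γ : Ordinal, γ.card ≤ Cardinal.aleph0 → Order.IsSuccLimit γ →
      Nonempty (V γ ≃o (Σ n : ℕ, V (seq γ n))))

include hV0 hV0ne hchainfin hseqmono hseqsucc hseqlt hseqcof hsucc hlimsucc hlim in
theorem core : ∀ α : Ordinal, α.card ≤ Cardinal.aleph0 → ∀ β : Ordinal, β < α →
    ∃ q : V α, (∃ x : V α, q < x) ∧
      (∀ u : V α, q ⋖ u → u ∈ derIter (univ : Set (V α)) β) ∧
      (∀ w : V α, q < w → w ∉ derIter (univ : Set (V α)) (β + 1)) := by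
  intro α
  induction α using Ordinal.induction with
  | h α ih =>
  intro hα β hβ
  rcases zero_or_succ_or_limit_old α with h0 | ⟨δ', hδ'⟩ | hl
  · subst h0; exact absurd hβ (by simp : ¬ β < 0)
  · rw [← Ordinal.add_one_eq_succ] at hδ'
    obtain ⟨δ, rfl⟩ : ∃ δ, α = δ + 1 := ⟨δ', hδ'⟩
    have hδlt : δ < δ + 1 := ord_lt_succ δ
    have hδc : δ.card ≤ Cardinal.aleph0 := le_trans (Ordinal.card_le_card hδlt.le) hα
    obtain ⟨mne, mw1, mw2, mw3⟩ := master V seq hV0 hV0ne hchainfin hseqmono hseqsucc hseqlt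
      hseqcof hsucc hlimsucc hlim δ hδc
    have hβδ : β ≤ δ := by rw [Ordinal.add_one_eq_succ] at hβ; exact Order.lt_succ_iff.mp hβ
    by_cases hdl : Order.IsSuccLimit δ
    · -- δ limit
      obtain ⟨f⟩ := hlimsucc δ hδc hdl
      obtain ⟨LOC, hcol⟩ := locB V seq hV0 hV0ne hchainfin hseqmono hseqsucc hseqlt
        hseqcof hsucc hlimsucc hlim δ hδc hdl
      rcases eq_or_lt_of_le hβδ with hβeq | hβlt
      · subst hβeq
        refine ⟨f.symm ⊥, ⟨f.symm ((mne.some : V β) : WithBot (V β)),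
          f.symm.lt_iff_lt.mpr (WithBot.bot_lt_coe _)⟩, ?_, ?_⟩
        · intro u hu
          have hcov : f (f.symm ⊥) ⋖ f u := (apply_covBy_apply_iff f).mpr hu
          rw [OrderIso.apply_symm_apply] at hcov
          rcases hfu : f u with _ | p
          · rw [hfu] at hcov; exact absurd hcov.1 (lt_irrefl ⊥)
          · rw [hfu] at hcov
            have hpmin : IsMin p := WithBot.bot_covBy_coe.mp hcov
            have hpS : p ∈ derIter (univ : Set (V β)) β :=
              isMin_mem_derIter (mem_univ p) (fun z hz => hpmin.not_lt hz) β
            rw [derIter_iso_mem f β u, hfu, LOC β le_rfl]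
            exact Or.inr ⟨p, hpS, rfl⟩
        · intro w hw hwS
          have hmem := (derIter_iso_mem f _ w).mp hwS
          rw [hcol] at hmem
          have heq : f w = ⊥ := Set.mem_singleton_iff.mp hmem
          have hlt : f (f.symm ⊥) < f w := f.lt_iff_lt.mpr hw
          rw [OrderIso.apply_symm_apply, heq] at hlt
          exact not_lt_bot hlt
      · -- β < δ, δ limit
        obtain ⟨g⟩ := hlim δ hδc hdl
        obtain ⟨n, hn⟩ := hseqcof δ hδc hdl β hβlt
        have hβnlt : seq δ n < δ + 1 := lt_trans (hseqlt δ hδc hdl n) hδlt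
        have hβnc : (seq δ n).card ≤ Cardinal.aleph0 :=
          le_trans (Ordinal.card_le_card hβnlt.le) hα
        obtain ⟨qt, ⟨xt, hxt⟩, hcovb, hdel⟩ := ih (seq δ n) hβnlt hβnc β hn
        set emb : V (seq δ n) → V (δ + 1) :=
          fun y => f.symm ((g.symm ⟨n, y⟩ : V δ) : WithBot (V δ)) with hembdef
        have hfemb : ∀ y : V (seq δ n),
            f (emb y) = ((g.symm ⟨n, y⟩ : V δ) : WithBot (V δ)) :=
          fun y => OrderIso.apply_symm_apply f _
        have hmem : ∀ (ρ : Ordinal), ρ ≤ δ → ∀ y : V (seq δ n),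
            (emb y ∈ derIter (univ : Set (V (δ + 1))) ρ ↔
              y ∈ derIter (univ : Set (V (seq δ n))) ρ) := by
          intro ρ hρ y
          rw [derIter_iso_mem f ρ, hfemb y, LOC ρ hρ, coe_mem_botSet,
            derIter_iso_mem g ρ, OrderIso.apply_symm_apply, derIter_sigma ρ]
          exact Iff.rfl
        have hemb_lt : ∀ y1 y2 : V (seq δ n), emb y1 < emb y2 ↔ y1 < y2 := fun y1 y2 =>
          (f.symm.lt_iff_lt).trans ((WithBot.coe_lt_coe).trans
            ((g.symm.lt_iff_lt).trans (Sigma.mk_lt_mk_iff (α := fun k => V (seq δ k)))))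
        refine ⟨emb qt, ⟨emb xt, (hemb_lt _ _).mpr hxt⟩, ?_, ?_⟩
        · intro u hu
          have hcov := (apply_covBy_apply_iff f).mpr hu
          rw [hfemb qt] at hcov
          rcases hfu : f u with _ | p
          · rw [hfu] at hcov; exact absurd hcov.1 not_lt_bot
          · rw [hfu] at hcov
            have hcov2 : g.symm ⟨n, qt⟩ ⋖ p := WithBot.coe_covBy_coe.mp hcov
            have hcov3 : (⟨n, qt⟩ : Σ k, V (seq δ k)) ⋖ g p := by
              have := (apply_covBy_apply_iff g).mpr hcov2
              rwa [OrderIso.apply_symm_apply] at this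
            rcases hgp : g p with ⟨k, c⟩
            rw [hgp] at hcov3
            obtain rfl : n = k := sigma_lt_fst hcov3.1
            have hqc : qt ⋖ c := (covBy_mk_iff (W := fun k => V (seq δ k))).mp hcov3
            have hueq : u = emb c := by
              have hp : p = g.symm ⟨n, c⟩ := by rw [← hgp, OrderIso.symm_apply_apply]
              rw [← f.symm_apply_apply u, hfu, hp]; rfl
            rw [hueq, hmem β hβlt.le c]
            exact hcovb c hqc
        · intro w hw hwS
          have hfw : f (emb qt) < f w := f.lt_iff_lt.mpr hw
          rw [hfemb qt] at hfw
          rcases hfweq : f w with _ | p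
          · rw [hfweq] at hfw; exact absurd hfw not_lt_bot
          · rw [hfweq] at hfw
            have h1 : g.symm ⟨n, qt⟩ < p := WithBot.coe_lt_coe.mp hfw
            have h2 : (⟨n, qt⟩ : Σ k, V (seq δ k)) < g p := by
              have := g.lt_iff_lt.mpr h1; rwa [OrderIso.apply_symm_apply] at this
            rcases hgp : g p with ⟨k, c⟩
            rw [hgp] at h2
            obtain rfl : n = k := sigma_lt_fst h2
            have hqc : qt < c := (Sigma.mk_lt_mk_iff (α := fun k => V (seq δ k))).mp h2
            have hweq : w = emb c := by
              have hp : p = g.symm ⟨n, c⟩ := by rw [← hgp, OrderIso.symm_apply_apply]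
              rw [← f.symm_apply_apply w, hfweq, hp]; rfl
            have hβ1 : β + 1 ≤ δ := by
              rw [Ordinal.add_one_eq_succ]; exact (hdl.succ_lt hβlt).le
            rw [hweq, hmem (β + 1) hβ1 c] at hwS
            exact hdel c hqc hwS
    · -- δ = 0 or successor
      have hcase : δ = 0 ∨ ∃ a : Ordinal, δ = a + 1 := by
        rcases zero_or_succ_or_limit_old δ with h | ⟨a, ha⟩ | h
        · exact Or.inl h
        · exact Or.inr ⟨a, by rw [ha, Ordinal.add_one_eq_succ]⟩
        · exact absurd h hdl
      obtain ⟨f⟩ := hsucc δ hδc hcase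
      obtain ⟨LOC, hcol⟩ := locA V seq hV0 hV0ne hchainfin hseqmono hseqsucc hseqlt
        hseqcof hsucc hlimsucc hlim δ hδc hcase
      rcases eq_or_lt_of_le hβδ with hβeq | hβlt
      · subst hβeq
        refine ⟨f.symm ⊥, ⟨f.symm (((⟨0, mne.some⟩ : Σ _ : ℕ, V β)) : WithBot (Σ _ : ℕ, V β)),
          f.symm.lt_iff_lt.mpr (WithBot.bot_lt_coe _)⟩, ?_, ?_⟩
        · intro u hu
          have hcov : f (f.symm ⊥) ⋖ f u := (apply_covBy_apply_iff f).mpr hu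
          rw [OrderIso.apply_symm_apply] at hcov
          rcases hfu : f u with _ | p
          · rw [hfu] at hcov; exact absurd hcov.1 (lt_irrefl ⊥)
          · rw [hfu] at hcov
            have hpmin : IsMin p := WithBot.bot_covBy_coe.mp hcov
            have hpS : p ∈ derIter (univ : Set (Σ _ : ℕ, V β)) β :=
              isMin_mem_derIter (mem_univ p) (fun z hz => hpmin.not_lt hz) β
            rw [derIter_iso_mem f β u, hfu, LOC β le_rfl]
            exact Or.inr ⟨p, hpS, rfl⟩
        · intro w hw hwS
          have hmem := (derIter_iso_mem f _ w).mp hwS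
          rw [hcol] at hmem
          have heq : f w = ⊥ := Set.mem_singleton_iff.mp hmem
          have hlt : f (f.symm ⊥) < f w := f.lt_iff_lt.mpr hw
          rw [OrderIso.apply_symm_apply, heq] at hlt
          exact not_lt_bot hlt
      · -- β < δ, δ successor-or-zero
        obtain ⟨qt, ⟨xt, hxt⟩, hcovb, hdel⟩ := ih δ hδlt hδc β hβlt
        set emb : V δ → V (δ + 1) :=
          fun y => f.symm (((⟨0, y⟩ : Σ _ : ℕ, V δ)) : WithBot (Σ _ : ℕ, V δ)) with hembdef
        have hfemb : ∀ y : V δ,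
            f (emb y) = (((⟨0, y⟩ : Σ _ : ℕ, V δ)) : WithBot (Σ _ : ℕ, V δ)) :=
          fun y => OrderIso.apply_symm_apply f _
        have hmem : ∀ (ρ : Ordinal), ρ ≤ δ → ∀ y : V δ,
            (emb y ∈ derIter (univ : Set (V (δ + 1))) ρ ↔
              y ∈ derIter (univ : Set (V δ)) ρ) := by
          intro ρ hρ y
          rw [derIter_iso_mem f ρ, hfemb y, LOC ρ hρ, coe_mem_botSet, derIter_sigma ρ]
          exact Iff.rfl
        have hemb_lt : ∀ y1 y2 : V δ, emb y1 < emb y2 ↔ y1 < y2 := fun y1 y2 =>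
          (f.symm.lt_iff_lt).trans ((WithBot.coe_lt_coe).trans
            (Sigma.mk_lt_mk_iff (α := fun _ : ℕ => V δ)))
        refine ⟨emb qt, ⟨emb xt, (hemb_lt _ _).mpr hxt⟩, ?_, ?_⟩
        · intro u hu
          have hcov := (apply_covBy_apply_iff f).mpr hu
          rw [hfemb qt] at hcov
          rcases hfu : f u with _ | p
          · rw [hfu] at hcov; exact absurd hcov.1 not_lt_bot
          · rw [hfu] at hcov
            have hcov2 : (⟨0, qt⟩ : Σ _ : ℕ, V δ) ⋖ p := WithBot.coe_covBy_coe.mp hcov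
            rcases p with ⟨k, c⟩
            obtain rfl : (0 : ℕ) = k := sigma_lt_fst hcov2.1
            have hqc : qt ⋖ c := (covBy_mk_iff (W := fun _ : ℕ => V δ)).mp hcov2
            have hueq : u = emb c := by
              rw [← f.symm_apply_apply u, hfu]; rfl
            rw [hueq, hmem β hβlt.le c]
            exact hcovb c hqc
        · intro w hw hwS
          have hfw : f (emb qt) < f w := f.lt_iff_lt.mpr hw
          rw [hfemb qt] at hfw
          rcases hfweq : f w with _ | p
          · rw [hfweq] at hfw; exact absurd hfw not_lt_bot
          · rw [hfweq] at hfw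
            have h2 : (⟨0, qt⟩ : Σ _ : ℕ, V δ) < p := WithBot.coe_lt_coe.mp hfw
            rcases p with ⟨k, c⟩
            obtain rfl : (0 : ℕ) = k := sigma_lt_fst h2
            have hqc : qt < c := (Sigma.mk_lt_mk_iff (α := fun _ : ℕ => V δ)).mp h2
            have hweq : w = emb c := by
              rw [← f.symm_apply_apply w, hfweq]; rfl
            have hβ1 : β + 1 ≤ δ := by
              rw [Ordinal.add_one_eq_succ]; exact Order.succ_le_of_lt hβlt
            rw [hweq, hmem (β + 1) hβ1 c] at hwS
            exact hdel c hqc hwS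
  · -- α limit
    obtain ⟨g⟩ := hlim α hα hl
    obtain ⟨n, hn⟩ := hseqcof α hα hl β hβ
    have hβnlt : seq α n < α := hseqlt α hα hl n
    have hβnc : (seq α n).card ≤ Cardinal.aleph0 :=
      le_trans (Ordinal.card_le_card hβnlt.le) hα
    obtain ⟨qt, ⟨xt, hxt⟩, hcovb, hdel⟩ := ih (seq α n) hβnlt hβnc β hn
    set emb : V (seq α n) → V α := fun y => g.symm ⟨n, y⟩ with hembdef
    have hgemb : ∀ y : V (seq α n), g (emb y) = ⟨n, y⟩ :=
      fun y => OrderIso.apply_symm_apply g _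
    have hmem : ∀ (ρ : Ordinal) (y : V (seq α n)),
        emb y ∈ derIter (univ : Set (V α)) ρ ↔
          y ∈ derIter (univ : Set (V (seq α n))) ρ := by
      intro ρ y
      rw [derIter_iso_mem g ρ, hgemb y, derIter_sigma ρ]
      exact Iff.rfl
    have hemb_lt : ∀ y1 y2 : V (seq α n), emb y1 < emb y2 ↔ y1 < y2 := fun y1 y2 =>
      (g.symm.lt_iff_lt).trans (Sigma.mk_lt_mk_iff (α := fun k => V (seq α k)))
    refine ⟨emb qt, ⟨emb xt, (hemb_lt _ _).mpr hxt⟩, ?_, ?_⟩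
    · intro u hu
      have hcov : g (emb qt) ⋖ g u := (apply_covBy_apply_iff g).mpr hu
      rw [hgemb qt] at hcov
      rcases hgu : g u with ⟨k, c⟩
      rw [hgu] at hcov
      obtain rfl : n = k := sigma_lt_fst hcov.1
      have hqc : qt ⋖ c := (covBy_mk_iff (W := fun k => V (seq α k))).mp hcov
      have hueq : u = emb c := by
        rw [← g.symm_apply_apply u, hgu]
      rw [hueq, hmem β c]
      exact hcovb c hqc
    · intro w hw hwS
      have hgw : g (emb qt) < g w := g.lt_iff_lt.mpr hw
      rw [hgemb qt] at hgw
      rcases hgweq : g w with ⟨k, c⟩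
      rw [hgweq] at hgw
      obtain rfl : n = k := sigma_lt_fst hgw
      have hqc : qt < c := (Sigma.mk_lt_mk_iff (α := fun k => V (seq α k))).mp hgw
      have hweq : w = emb c := by
        rw [← g.symm_apply_apply w, hgweq]
      rw [hweq, hmem (β + 1) c] at hwS
      exact hdel c hqc hwS

end Family3

theorem statement12
    (V : Ordinal → Type) [∀ γ : Ordinal, PartialOrder (V γ)]
    (seq : Ordinal → ℕ → Ordinal)
    (hV0 : ∀ x y : V 0, x = y) (hV0ne : Nonempty (V 0))
    (hchainfin : ∀ γ : Ordinal, γ.card ≤ Cardinal.aleph0 → ∀ x : V γ, {y : V γ | y ≤ x}.Finite)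
    (hchainlin : ∀ γ : Ordinal, γ.card ≤ Cardinal.aleph0 →
      ∀ x y w : V γ, y ≤ x → w ≤ x → y ≤ w ∨ w ≤ y)
    (hseqmono : ∀ γ : Ordinal, γ.card ≤ Cardinal.aleph0 → Order.IsSuccLimit γ → StrictMono (seq γ))
    (hseqsucc : ∀ γ : Ordinal, γ.card ≤ Cardinal.aleph0 → Order.IsSuccLimit γ →
      ∀ n : ℕ, ∃ δ : Ordinal, seq γ n = δ + 1)
    (hseqlt : ∀ γ : Ordinal, γ.card ≤ Cardinal.aleph0 → Order.IsSuccLimit γ → ∀ n : ℕ, seq γ n < γ)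
    (hseqcof : ∀ γ : Ordinal, γ.card ≤ Cardinal.aleph0 → Order.IsSuccLimit γ →
      ∀ δ : Ordinal, δ < γ → ∃ n : ℕ, δ < seq γ n)
    (hsucc : ∀ γ : Ordinal, γ.card ≤ Cardinal.aleph0 → (γ = 0 ∨ ∃ δ : Ordinal, γ = δ + 1) →
      Nonempty (V (γ + 1) ≃o WithBot (Σ _ : ℕ, V γ)))
    (hlimsucc : ∀ γ : Ordinal, γ.card ≤ Cardinal.aleph0 → Order.IsSuccLimit γ →
      Nonempty (V (γ + 1) ≃o WithBot (V γ)))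
    (hlim : ∀ γ : Ordinal, γ.card ≤ Cardinal.aleph0 → Order.IsSuccLimit γ →
      Nonempty (V γ ≃o (Σ n : ℕ, V (seq γ n))))
    {Z : Type*} [NormedAddCommGroup Z] [NormedSpace ℝ Z] [CompleteSpace Z]
    (z : ℕ → Z) (zs : ℕ → StrongDual ℝ Z) (C K : ℝ)
    (hz1 : ∀ i : ℕ, 1 ≤ ‖z i‖)
    (hzC : ∀ k : ℕ, ‖∑ i ∈ Finset.range k, z i‖ ≤ C)
    (hbasic : ∀ m n : ℕ, m ≤ n → ∀ a : ℕ → ℝ,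
      ‖∑ i ∈ Finset.range m, a i • z i‖ ≤ K * ‖∑ i ∈ Finset.range n, a i • z i‖)
    (hspan : (Submodule.span ℝ (Set.range z)).topologicalClosure = ⊤)
    (hbi : ∀ i j : ℕ, zs j (z i) = if i = j then (1 : ℝ) else 0)
    (α : Ordinal) (hαc : α.card ≤ Cardinal.aleph0)
    (e : V α → ℕ) (heinj : Function.Injective e)
    (hemono : ∀ x y : V α, x < y → e x < e y)
    (hepos : ∀ x : V α, e x ≠ 0)
    (β : Ordinal) (hβ : β < α) :
    ∃ y ∈ XsetOf e zs (derIter (Set.univ : Set (V α)) (β + 1)),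
      y ∉ closure (convexHull ℝ (⋃ γ : Ordinal, ⋃ _ : γ ≤ β, XsetOf e zs (derIter (Set.univ : Set (V α)) γ))) ∧
      ∃ F : StrongDual ℝ (StrongDual ℝ Z),
        ∀ w ∈ convexHull ℝ (⋃ γ : Ordinal, ⋃ _ : γ ≤ β, XsetOf e zs (derIter (Set.univ : Set (V α)) γ)), F w < F y := by
  classical
  -- abbreviations
  have hfinα : ∀ x : V α, {y : V α | y ≤ x}.Finite := hchainfin α hαc
  -- ## Part 1: the ultrafilter limit functional Φ with Φ (zs m) = 1
  obtain ⟨U, hU⟩ : ∃ U : Ultrafilter ℕ, ↑U ≤ (atTop : Filter ℕ) :=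
    ⟨Ultrafilter.of atTop, Ultrafilter.of_le _⟩
  have hC0 : (0 : ℝ) ≤ C := le_trans (norm_nonneg _) (hzC 0)
  have hex : ∀ f : StrongDual ℝ Z, ∃ c : ℝ,
      Tendsto (fun N => f (∑ i ∈ Finset.range N, z i)) ↑U (𝓝 c) := by
    intro f
    have hb : ∀ N : ℕ, f (∑ i ∈ Finset.range N, z i) ∈ Set.Icc (-(‖f‖ * C)) (‖f‖ * C) := by
      intro N
      have h1 : |f (∑ i ∈ Finset.range N, z i)| ≤ ‖f‖ * C := by
        have h2 : ‖f (∑ i ∈ Finset.range N, z i)‖ ≤ ‖f‖ * ‖∑ i ∈ Finset.range N, z i‖ :=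
          f.le_opNorm _
        rw [Real.norm_eq_abs] at h2
        exact le_trans h2 (mul_le_mul_of_nonneg_left (hzC N) (norm_nonneg f))
      exact abs_le.mp h1
    have hle : (U.map (fun N => f (∑ i ∈ Finset.range N, z i)) : Filter ℝ) ≤
        Filter.principal (Set.Icc (-(‖f‖ * C)) (‖f‖ * C)) := by
      rw [Filter.le_principal_iff]
      exact Filter.mem_map.mpr (Filter.univ_mem' hb)
    obtain ⟨c, -, hc⟩ := (isCompact_Icc (a := -(‖f‖ * C)) (b := ‖f‖ * C)).ultrafilter_le_nhds
      (U.map (fun N => f (∑ i ∈ Finset.range N, z i))) hle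
    exact ⟨c, hc⟩
  choose φ hφ using hex
  have hadd : ∀ f g : StrongDual ℝ Z, φ (f + g) = φ f + φ g := by
    intro f g
    exact tendsto_nhds_unique (hφ (f + g)) ((hφ f).add (hφ g))
  have hsmul : ∀ (c : ℝ) (f : StrongDual ℝ Z), φ (c • f) = c * φ f := by
    intro c f
    exact tendsto_nhds_unique (hφ (c • f)) ((hφ f).const_mul c)
  have hbound : ∀ f : StrongDual ℝ Z, ‖φ f‖ ≤ C * ‖f‖ := by
    intro f
    rw [Real.norm_eq_abs]
    have habs : Tendsto (fun N => |f (∑ i ∈ Finset.range N, z i)|) ↑U (𝓝 |φ f|) := (hφ f).abs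
    refine le_of_tendsto habs (Filter.Eventually.of_forall fun N => ?_)
    have h2 : ‖f (∑ i ∈ Finset.range N, z i)‖ ≤ ‖f‖ * ‖∑ i ∈ Finset.range N, z i‖ := f.le_opNorm _
    rw [Real.norm_eq_abs] at h2
    calc |f (∑ i ∈ Finset.range N, z i)| ≤ ‖f‖ * C :=
          le_trans h2 (mul_le_mul_of_nonneg_left (hzC N) (norm_nonneg f))
      _ = C * ‖f‖ := mul_comm _ _
  set Φ : StrongDual ℝ (StrongDual ℝ Z) :=
    LinearMap.mkContinuous
      { toFun := φ, map_add' := hadd, map_smul' := hsmul } C hbound with hΦdef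
  have hΦf : ∀ f, Φ f = φ f := fun f => rfl
  have hΦzs : ∀ m : ℕ, Φ (zs m) = 1 := by
    intro m
    rw [hΦf]
    refine tendsto_nhds_unique (hφ (zs m)) ?_
    have hev : ∀ᶠ N in (atTop : Filter ℕ), zs m (∑ i ∈ Finset.range N, z i) = 1 := by
      filter_upwards [Filter.eventually_ge_atTop (m + 1)] with N hN
      rw [map_sum]
      have : ∀ i ∈ Finset.range N, zs m (z i) = if i = m then (1 : ℝ) else 0 :=
        fun i _ => hbi i m
      rw [Finset.sum_congr rfl this, Finset.sum_ite_eq' (Finset.range N) m (fun _ => (1 : ℝ))]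
      simp [Finset.mem_range, Nat.lt_of_succ_le hN]
    have h1 : Tendsto (fun N => zs m (∑ i ∈ Finset.range N, z i)) atTop (𝓝 1) :=
      Tendsto.congr' (by filter_upwards [hev] with N hN using hN.symm) tendsto_const_nhds
    exact h1.mono_left hU
  -- ## Part 2: the combinatorial vertex q and the chain below it
  obtain ⟨q, ⟨x₀, hqx₀⟩, hcovb, hdel⟩ := core V seq hV0 hV0ne hchainfin hseqmono hseqsucc
    hseqlt hseqcof hsucc hlimsucc hlim α hαc β hβ
  obtain ⟨u₀, hu₀cov, -⟩ := exists_covby_le hfinα hqx₀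
  have hu₀β : u₀ ∈ derIter (univ : Set (V α)) β := hcovb u₀ hu₀cov
  have hqβ : q ∈ derIter (univ : Set (V α)) β := derIter_downClosed hfinα hu₀cov.1.le β hu₀β
  have hqS1 : q ∈ derIter (univ : Set (V α)) (β + 1) := by
    rw [derIter_succ]
    refine ⟨hqβ, fun hdelc => ?_⟩
    exact hdelc.1.2 u₀ ⟨hqβ, hu₀β, hu₀cov.1, fun w hw hbet => hu₀cov.2 hbet.1 hbet.2⟩
  obtain ⟨-, -, -, mw3⟩ := master V seq hV0 hV0ne hchainfin hseqmono hseqsucc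
    hseqlt hseqcof hsucc hlimsucc hlim α hαc
  obtain ⟨v, hqv_le, hvmax⟩ := mw3 q
  have hqv : q < v := by
    refine lt_of_le_of_ne hqv_le ?_
    rintro rfl
    exact hvmax x₀ hqx₀
  have hvnocov : ¬∃ y' : V α, v ⋖ y' := fun ⟨y', hy'⟩ => hvmax y' hy'.1
  have hCfin : ({w : V α | w ≤ q}).Finite := hfinα q
  set Cfin : Finset (V α) := hCfin.toFinset with hCfin_def
  have hmemC : ∀ t : V α, t ∈ Cfin ↔ t ≤ q := fun t => hCfin.mem_toFinset
  have hchain : {w : V α | w ≤ v} ∩ derIter (univ : Set (V α)) (β + 1) = {w : V α | w ≤ q} := by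
    ext w
    constructor
    · rintro ⟨hwv, hwS⟩
      rcases hchainlin α hαc v w q hwv hqv.le with h | h
      · exact h
      · rcases eq_or_lt_of_le h with rfl | hlt
        · exact le_rfl
        · exact absurd hwS (hdel w hlt)
    · intro hwq
      exact ⟨le_trans hwq hqv.le, derIter_downClosed hfinα hwq (β + 1) hqS1⟩
  -- coefficients
  have hc1 : ∀ t : V α, (1 : ℝ) ≤ (coefN e t : ℝ) := by
    intro t
    have hne : coefN e t ≠ 0 := by
      unfold coefN
      split
      · exact hepos _
      · exact hepos t
    exact_mod_cast Nat.one_le_iff_ne_zero.mpr hne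
  have hc0 : ∀ t : V α, (0 : ℝ) ≤ (coefN e t : ℝ) := fun t => le_trans zero_le_one (hc1 t)
  -- ## Part 3: the separating functional F and its values
  set F : StrongDual ℝ (StrongDual ℝ Z) :=
    (∑ u ∈ Cfin, NormedSpace.inclusionInDoubleDual ℝ Z (z (e u))) - (2⁻¹ : ℝ) • Φ with hF
  have hFval : ∀ T : Finset (V α),
      F (∑ t ∈ T, (coefN e t : ℝ) • zs (e t)) =
        (∑ t ∈ T ∩ Cfin, (coefN e t : ℝ)) - 2⁻¹ * ∑ t ∈ T, (coefN e t : ℝ) := by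
    intro T
    have happ : ∀ m : ℕ, (∑ t ∈ T, (coefN e t : ℝ) • zs (e t)) (z m) =
        ∑ t ∈ T, (if m = e t then (coefN e t : ℝ) else 0) := by
      intro m
      rw [ContinuousLinearMap.sum_apply]
      refine Finset.sum_congr rfl fun t _ => ?_
      rw [ContinuousLinearMap.smul_apply, hbi m (e t)]
      simp [smul_eq_mul, mul_ite]
    have hΦval : Φ (∑ t ∈ T, (coefN e t : ℝ) • zs (e t)) = ∑ t ∈ T, (coefN e t : ℝ) := by
      rw [map_sum]
      refine Finset.sum_congr rfl fun t _ => ?_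
      rw [map_smul, hΦzs (e t), smul_eq_mul, mul_one]
    rw [hF, ContinuousLinearMap.sub_apply, ContinuousLinearMap.smul_apply,
      ContinuousLinearMap.sum_apply, hΦval]
    have hterm : ∀ u ∈ Cfin, (NormedSpace.inclusionInDoubleDual ℝ Z (z (e u)))
        (∑ t ∈ T, (coefN e t : ℝ) • zs (e t)) =
        ∑ t ∈ T, (if e u = e t then (coefN e t : ℝ) else 0) := by
      intro u _
      rw [NormedSpace.dual_def]
      exact happ (e u)
    rw [Finset.sum_congr rfl hterm, Finset.sum_comm]
    have h2 : ∀ t ∈ T, (∑ u ∈ Cfin, if e u = e t then (coefN e t : ℝ) else 0) =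
        if t ∈ Cfin then (coefN e t : ℝ) else 0 := by
      intro t _
      rw [← Finset.sum_ite_eq' Cfin t (fun _ => (coefN e t : ℝ))]
      refine Finset.sum_congr rfl fun u _ => ?_
      refine if_congr ?_ rfl rfl
      exact ⟨fun h => heinj h, fun h => by rw [h]⟩
    rw [Finset.sum_congr rfl h2, Finset.sum_ite_mem T Cfin, smul_eq_mul]
  -- the distinguished element y
  have hEy : ({w : V α | w ≤ v} ∩ derIter (univ : Set (V α)) (β + 1)).Finite := by
    rw [hchain]; exact hCfin
  have hyform : shortVec e zs (derIter (univ : Set (V α)) (β + 1)) v =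
      ∑ t ∈ Cfin, (coefN e t : ℝ) • zs (e t) := by
    show (∑ᶠ u ∈ ({w : V α | w ≤ v} ∩ derIter (univ : Set (V α)) (β + 1)),
      (coefN e u : ℝ) • zs (e u)) = _
    rw [hchain]
    exact finsum_mem_eq_finite_toFinset_sum _ hCfin
  set P : ℝ := ∑ t ∈ Cfin, (coefN e t : ℝ) with hP
  have hFy : F (shortVec e zs (derIter (univ : Set (V α)) (β + 1)) v) = P - 2⁻¹ * P := by
    rw [hyform, hFval Cfin, Finset.inter_self]
  -- ## Part 4: the uniform bound on the union
  have hbnd : ∀ w ∈ (⋃ γ : Ordinal, ⋃ _ : γ ≤ β,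
      XsetOf e zs (derIter (Set.univ : Set (V α)) γ)), F w ≤ 2⁻¹ * P - 2⁻¹ := by
    intro w hw
    simp only [Set.mem_iUnion] at hw
    obtain ⟨γ, hγβ, v', hv'nocov, rfl⟩ := hw
    have hE : ({t : V α | t ≤ v'} ∩ derIter (univ : Set (V α)) γ).Finite :=
      (hfinα v').subset Set.inter_subset_left
    have hwform : shortVec e zs (derIter (univ : Set (V α)) γ) v' =
        ∑ t ∈ hE.toFinset, (coefN e t : ℝ) • zs (e t) :=
      finsum_mem_eq_finite_toFinset_sum _ hE
    rw [hwform, hFval]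
    have hGP : (∑ t ∈ hE.toFinset ∩ Cfin, (coefN e t : ℝ)) ≤ P :=
      Finset.sum_le_sum_of_subset_of_nonneg Finset.inter_subset_right
        (fun t _ _ => hc0 t)
    have hTG : (∑ t ∈ hE.toFinset ∩ Cfin, (coefN e t : ℝ)) ≤
        ∑ t ∈ hE.toFinset, (coefN e t : ℝ) :=
      Finset.sum_le_sum_of_subset_of_nonneg Finset.inter_subset_left (fun t _ _ => hc0 t)
    by_cases hqE : q ∈ hE.toFinset
    · -- q lies below v' and survives; some cover of q also survives
      have hqE' := hE.mem_toFinset.mp hqE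
      have hv'max : ∀ z' : V α, ¬ v' < z' := by
        intro z' hz'
        obtain ⟨u, hu, -⟩ := exists_covby_le hfinα hz'
        exact hv'nocov ⟨u, hu⟩
      have hqv' : q < v' := by
        refine lt_of_le_of_ne hqE'.1 ?_
        rintro rfl
        exact hv'max x₀ hqx₀
      obtain ⟨u, hucov, huv'⟩ := exists_covby_le hfinα hqv'
      have huγ : u ∈ derIter (univ : Set (V α)) γ :=
        derIter_antitone _ hγβ (hcovb u hucov)
      have huE : u ∈ hE.toFinset := hE.mem_toFinset.mpr ⟨huv', huγ⟩
      have huC : u ∉ Cfin := by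
        intro hu
        exact absurd ((hmemC u).mp hu) (not_le_of_gt hucov.1)
      have huIC : u ∉ hE.toFinset ∩ Cfin := fun h => huC (Finset.mem_inter.mp h).2
      have hsum : (∑ t ∈ (hE.toFinset ∩ Cfin) ∪ {u}, (coefN e t : ℝ)) =
          (∑ t ∈ hE.toFinset ∩ Cfin, (coefN e t : ℝ)) + (coefN e u : ℝ) := by
        rw [Finset.sum_union (Finset.disjoint_singleton_right.mpr huIC), Finset.sum_singleton]
      have hsub : (hE.toFinset ∩ Cfin) ∪ {u} ⊆ hE.toFinset := by
        intro t ht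
        rcases Finset.mem_union.mp ht with h | h
        · exact (Finset.mem_inter.mp h).1
        · rw [Finset.mem_singleton.mp h]; exact huE
      have hTT : (∑ t ∈ hE.toFinset ∩ Cfin, (coefN e t : ℝ)) + (coefN e u : ℝ) ≤
          ∑ t ∈ hE.toFinset, (coefN e t : ℝ) := by
        rw [← hsum]
        exact Finset.sum_le_sum_of_subset_of_nonneg hsub (fun t _ _ => hc0 t)
      have := hc1 u
      linarith
    · -- q does not survive along v': the chain misses the top coefficient
      have hqC : q ∈ Cfin := (hmemC q).mpr le_rfl
      have hsub2 : hE.toFinset ∩ Cfin ⊆ Cfin.erase q := by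
        intro t ht
        obtain ⟨htE, htC⟩ := Finset.mem_inter.mp ht
        refine Finset.mem_erase.mpr ⟨?_, htC⟩
        rintro rfl
        exact hqE htE
      have hGe : (∑ t ∈ hE.toFinset ∩ Cfin, (coefN e t : ℝ)) ≤
          ∑ t ∈ Cfin.erase q, (coefN e t : ℝ) :=
        Finset.sum_le_sum_of_subset_of_nonneg hsub2 (fun t _ _ => hc0 t)
      have herase : (∑ t ∈ Cfin.erase q, (coefN e t : ℝ)) + (coefN e q : ℝ) = P :=
        Finset.sum_erase_add Cfin _ hqC
      have := hc1 q
      linarith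
  -- ## Part 5: assembly
  refine ⟨shortVec e zs (derIter (Set.univ : Set (V α)) (β + 1)) v, ⟨v, hvnocov, rfl⟩, ?_, ?_⟩
  · -- not in the closed convex hull
    intro hmem
    have hcvx : convexHull ℝ (⋃ γ : Ordinal, ⋃ _ : γ ≤ β,
        XsetOf e zs (derIter (Set.univ : Set (V α)) γ)) ⊆ {x | F x ≤ 2⁻¹ * P - 2⁻¹} :=
      convexHull_min hbnd (convex_halfSpace_le ⟨fun a b => F.map_add a b,
        fun c a => F.map_smul c a⟩ _)
    have hcl : closure (convexHull ℝ (⋃ γ : Ordinal, ⋃ _ : γ ≤ β,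
        XsetOf e zs (derIter (Set.univ : Set (V α)) γ))) ⊆ {x | F x ≤ 2⁻¹ * P - 2⁻¹} :=
      closure_minimal hcvx (isClosed_le F.continuous continuous_const)
    have h1 : F (shortVec e zs (derIter (Set.univ : Set (V α)) (β + 1)) v) ≤ 2⁻¹ * P - 2⁻¹ :=
      hcl hmem
    rw [hFy] at h1
    linarith
  · -- the separating functional
    refine ⟨F, fun w hw => ?_⟩
    have hcvx : convexHull ℝ (⋃ γ : Ordinal, ⋃ _ : γ ≤ β,
        XsetOf e zs (derIter (Set.univ : Set (V α)) γ)) ⊆ {x | F x ≤ 2⁻¹ * P - 2⁻¹} :=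
      convexHull_min hbnd (convex_halfSpace_le ⟨fun a b => F.map_add a b,
        fun c a => F.map_smul c a⟩ _)
    have h1 : F w ≤ 2⁻¹ * P - 2⁻¹ := hcvx hw
    rw [hFy]
    linarith


end Paper
end
end

section
/- If the sequence of convex combinations (Σ_{x∈W} a_{x,i} x)_{i=1}^∞ is bounded in norm in Z*, then Σ_{x∈I} p_x + Σ_{y∈D} s_y = 1. -/
open Set Filter Topology

noncomputable section

namespace Paper

section AuxOrder
variable {P : Type*} [PartialOrder P]

lemma exists_cover_aux (hfin : ∀ x : P, {y | y ≤ x}.Finite)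
    {w m : P} (h : w < m) : ∃ w', w ≤ w' ∧ w' ⋖ m := by
  have hsfin : {y | w ≤ y ∧ y < m}.Finite :=
    (hfin m).subset (fun y hy => le_of_lt hy.2)
  obtain ⟨b, hb, hbmax⟩ := hsfin.exists_maximal ⟨w, le_refl w, h⟩
  refine ⟨b, hb.1, hb.2, fun c hbc hcm => ?_⟩
  have hc : c ∈ {y | w ≤ y ∧ y < m} := ⟨hb.1.trans hbc.le, hcm⟩
  exact absurd (hbmax hc hbc.le) (not_le_of_gt hbc)

lemma cover_unique_aux (hlin : ∀ x y w : P, y ≤ x → w ≤ x → y ≤ w ∨ w ≤ y)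
    {w₁ w₂ m : P} (h1 : w₁ ⋖ m) (h2 : w₂ ⋖ m) : w₁ = w₂ := by
  rcases hlin m w₁ w₂ h1.le h2.le with h | h
  · rcases eq_or_lt_of_le h with h' | h'
    · exact h'
    · exact absurd h2.lt (h1.2 h')
  · rcases eq_or_lt_of_le h with h' | h'
    · exact h'.symm
    · exact absurd h1.lt (h2.2 h')

lemma coefN_eq_of_cov_aux (hlin : ∀ x y w : P, y ≤ x → w ≤ x → y ≤ w ∨ w ≤ y)
    (e : P → ℕ) {w m : P} (h : w ⋖ m) : coefN e m = e w := by
  have h' : ∃ w, w ⋖ m := ⟨w, h⟩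
  simp only [coefN]
  rw [dif_pos h']
  exact congrArg e (cover_unique_aux hlin h'.choose_spec h)

lemma coefN_eq_self_aux (e : P → ℕ) {m : P} (h : ¬∃ w, w ⋖ m) : coefN e m = e m := by
  simp only [coefN]
  rw [dif_neg h]

end AuxOrder

lemma sum_indicator_eq_sum_filter_aux {ι M : Type*} [AddCommMonoid M] (E : Finset ι)
    (S : Set ι) [DecidablePred (fun x => x ∈ S)] (f : ι → M) :
    ∑ x ∈ E, S.indicator f x = ∑ x ∈ E.filter (fun x => x ∈ S), f x := by
  rw [Finset.sum_filter]
  exact Finset.sum_congr rfl fun x _ => by simp [Set.indicator_apply]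


theorem statement16
    (V : Ordinal → Type) [∀ γ : Ordinal, PartialOrder (V γ)]
    (seq : Ordinal → ℕ → Ordinal)
    (hV0 : ∀ x y : V 0, x = y) (hV0ne : Nonempty (V 0))
    (hchainfin : ∀ γ : Ordinal, γ.card ≤ Cardinal.aleph0 → ∀ x : V γ, {y : V γ | y ≤ x}.Finite)
    (hchainlin : ∀ γ : Ordinal, γ.card ≤ Cardinal.aleph0 →
      ∀ x y w : V γ, y ≤ x → w ≤ x → y ≤ w ∨ w ≤ y)
    (hseqmono : ∀ γ : Ordinal, γ.card ≤ Cardinal.aleph0 → Order.IsSuccLimit γ → StrictMono (seq γ))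
    (hseqsucc : ∀ γ : Ordinal, γ.card ≤ Cardinal.aleph0 → Order.IsSuccLimit γ →
      ∀ n : ℕ, ∃ δ : Ordinal, seq γ n = δ + 1)
    (hseqlt : ∀ γ : Ordinal, γ.card ≤ Cardinal.aleph0 → Order.IsSuccLimit γ → ∀ n : ℕ, seq γ n < γ)
    (hseqcof : ∀ γ : Ordinal, γ.card ≤ Cardinal.aleph0 → Order.IsSuccLimit γ →
      ∀ δ : Ordinal, δ < γ → ∃ n : ℕ, δ < seq γ n)
    (hsucc : ∀ γ : Ordinal, γ.card ≤ Cardinal.aleph0 → (γ = 0 ∨ ∃ δ : Ordinal, γ = δ + 1) →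
      Nonempty (V (γ + 1) ≃o WithBot (Σ _ : ℕ, V γ)))
    (hlimsucc : ∀ γ : Ordinal, γ.card ≤ Cardinal.aleph0 → Order.IsSuccLimit γ →
      Nonempty (V (γ + 1) ≃o WithBot (V γ)))
    (hlim : ∀ γ : Ordinal, γ.card ≤ Cardinal.aleph0 → Order.IsSuccLimit γ →
      Nonempty (V γ ≃o (Σ n : ℕ, V (seq γ n))))
    {Z : Type*} [NormedAddCommGroup Z] [NormedSpace ℝ Z] [CompleteSpace Z]
    (z : ℕ → Z) (zs : ℕ → StrongDual ℝ Z) (C K : ℝ)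
    (hz1 : ∀ i : ℕ, 1 ≤ ‖z i‖)
    (hzC : ∀ k : ℕ, ‖∑ i ∈ Finset.range k, z i‖ ≤ C)
    (hbasic : ∀ m n : ℕ, m ≤ n → ∀ a : ℕ → ℝ,
      ‖∑ i ∈ Finset.range m, a i • z i‖ ≤ K * ‖∑ i ∈ Finset.range n, a i • z i‖)
    (hspan : (Submodule.span ℝ (Set.range z)).topologicalClosure = ⊤)
    (hbi : ∀ i j : ℕ, zs j (z i) = if i = j then (1 : ℝ) else 0)
    (α : Ordinal) (hαc : α.card ≤ Cardinal.aleph0)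
    (e : V α → ℕ) (heinj : Function.Injective e)
    (hemono : ∀ x y : V α, x < y → e x < e y)
    (hepos : ∀ x : V α, e x ≠ 0)
    (β : Ordinal) (hβ : β ≤ α)
    (W : Set (StrongDual ℝ Z)) (hW : W = (⋃ γ : Ordinal, ⋃ _ : γ ≤ β, XsetOf e zs (derIter (Set.univ : Set (V α)) γ)))
    (I : Set (StrongDual ℝ Z))
    (hI : I = {x | x ∈ W ∧ ∃ u : V α, e u = topIdx z x ∧ ¬∃ w, w ⋖ u})
    (D : Set (StrongDual ℝ Z)) (hD : D = truncTop z zs '' (W \ I))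
    (a : ℕ → StrongDual ℝ Z → ℝ)
    (hasupp : ∀ i : ℕ, (Function.support (a i)).Finite)
    (haW : ∀ i : ℕ, Function.support (a i) ⊆ W)
    (hann : ∀ (i : ℕ) (x : StrongDual ℝ Z), 0 ≤ a i x)
    (hasum : ∀ i : ℕ, ∑ᶠ x, a i x = 1)
    (p : StrongDual ℝ Z → ℝ)
    (hp : ∀ x ∈ W, Filter.Tendsto (fun i => a i x) Filter.atTop (nhds (p x)))
    (s : StrongDual ℝ Z → ℝ)
    (hs : ∀ y ∈ D, Filter.Tendsto
      (fun i => ∑ᶠ x ∈ {x | x ∈ W \ I ∧ truncTop z zs x = y}, a i x)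
      Filter.atTop (nhds (s y)))
    (hbdd : ∃ M : ℝ, ∀ i : ℕ, ‖∑ᶠ x, a i x • x‖ ≤ M) :
    ∑' x : ↥I, p x.1 + ∑' y : ↥D, s y.1 = 1 := by
  classical
  have hfin := hchainfin α hαc
  have hlin := hchainlin α hαc
  have hcoef_pos : ∀ u : V α, coefN e u ≠ 0 := by
    intro u
    simp only [coefN]
    split
    · exact hepos _
    · exact hepos _
  -- representation of elements of W
  have hrep0 : ∀ x ∈ W, ∃ T : Finset (V α),
      (∀ u ∈ T, ∀ w ∈ T, u ≤ w ∨ w ≤ u) ∧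
        x = ∑ u ∈ T, (coefN e u : ℝ) • zs (e u) := by
    intro x hx
    rw [hW] at hx
    simp only [Set.mem_iUnion] at hx
    obtain ⟨γ, hγ, v, hv, rfl⟩ := hx
    have hsfin : (({w | w ≤ v} ∩ derIter (Set.univ : Set (V α)) γ) ∩
        Function.support (fun u => (coefN e u : ℝ) • zs (e u))).Finite :=
      ((hfin v).subset (fun y hy => hy.1)).subset Set.inter_subset_left
    refine ⟨hsfin.toFinset, ?_, ?_⟩
    · intro u hu w hw
      rw [Set.Finite.mem_toFinset] at hu hw
      exact hlin v u w hu.1.1 hw.1.1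
    · exact finsum_mem_eq_sum _ hsfin
  choose! T hT using hrep0
  have hTrep : ∀ x ∈ W, x = ∑ u ∈ T x, (coefN e u : ℝ) • zs (e u) := fun x hx => (hT x hx).2
  set wt : StrongDual ℝ Z → ℝ := fun x => ∑ u ∈ T x, (coefN e u : ℝ) with hwtdef
  have hwt_nonneg : ∀ x, 0 ≤ wt x := fun x =>
    Finset.sum_nonneg fun u _ => by positivity
  have happly : ∀ x ∈ W, ∀ g : Z, x g = ∑ u ∈ T x, (coefN e u : ℝ) * zs (e u) g := by
    intro x hx g
    conv_lhs => rw [hTrep x hx]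
    rw [ContinuousLinearMap.sum_apply]
    exact Finset.sum_congr rfl fun u _ => by
      rw [ContinuousLinearMap.smul_apply, smul_eq_mul]
  have heval_z_mem : ∀ x ∈ W, ∀ u₀ ∈ T x, x (z (e u₀)) = (coefN e u₀ : ℝ) := by
    intro x hx u₀ hu₀
    rw [happly x hx]
    rw [Finset.sum_eq_single_of_mem u₀ hu₀]
    · rw [hbi, if_pos rfl, mul_one]
    · intro b hb hne
      rw [hbi, if_neg (fun h => hne (heinj h.symm)), mul_zero]
  have heval_z_nmem : ∀ x ∈ W, ∀ n : ℕ, (∀ u ∈ T x, e u ≠ n) → x (z n) = 0 := by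
    intro x hx n hn
    rw [happly x hx]
    apply Finset.sum_eq_zero
    intro u hu
    rw [hbi, if_neg (fun h => hn u hu h.symm), mul_zero]
  have hsupp_z : ∀ x ∈ W, {n | x (z n) ≠ 0} = ↑((T x).image e) := by
    intro x hx
    ext n
    simp only [Set.mem_setOf_eq, Finset.coe_image, Set.mem_image, Finset.mem_coe]
    constructor
    · intro h
      by_contra hc
      push_neg at hc
      exact h (heval_z_nmem x hx n (fun u hu => hc u hu))
    · rintro ⟨u, hu, rfl⟩
      rw [heval_z_mem x hx u hu]
      exact_mod_cast hcoef_pos u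
  have hmaxex : ∀ x ∈ W, (T x).Nonempty → ∃ mx ∈ T x, ∀ u ∈ T x, u ≤ mx := by
    intro x hx hne
    obtain ⟨mx, hmx, hmax⟩ := Finset.exists_maximal (s := T x) hne
    refine ⟨mx, hmx, fun u hu => ?_⟩
    rcases (hT x hx).1 u hu mx hmx with h | h
    · exact h
    · rcases eq_or_lt_of_le h with h' | h'
      · exact le_of_eq h'.symm
      · exact absurd (hmax hu h'.le) (not_le_of_gt h')
  have htop : ∀ x ∈ W, ∀ mx ∈ T x, (∀ u ∈ T x, u ≤ mx) → topIdx z x = e mx := by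
    intro x hx mx hmx hmax
    rw [topIdx, hsupp_z x hx]
    have hmem : (e mx) ∈ (↑((T x).image e) : Set ℕ) := by
      simp only [Finset.coe_image, Set.mem_image, Finset.mem_coe]
      exact ⟨mx, hmx, rfl⟩
    apply le_antisymm
    · refine csSup_le ⟨e mx, hmem⟩ ?_
      rintro n hn
      simp only [Finset.coe_image, Set.mem_image, Finset.mem_coe] at hn
      obtain ⟨u, hu, rfl⟩ := hn
      rcases eq_or_lt_of_le (hmax u hu) with h | h
      · exact le_of_eq (congrArg e h)
      · exact le_of_lt (hemono u mx h)
    · exact le_csSup ((T x).image e).bddAbove hmem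
  have hevalS : ∀ x ∈ W, ∀ k : ℕ, (∀ u ∈ T x, e u < k) →
      x (∑ j ∈ Finset.range k, z j) = wt x := by
    intro x hx k hk
    rw [happly x hx]
    apply Finset.sum_congr rfl
    intro u hu
    rw [map_sum]
    have : ∀ j ∈ Finset.range k, zs (e u) (z j) = if j = e u then (1:ℝ) else 0 :=
      fun j _ => hbi j (e u)
    rw [Finset.sum_congr rfl this, Finset.sum_ite_eq' (Finset.range k) (e u) (fun _ => (1:ℝ)),
      if_pos (Finset.mem_range.mpr (hk u hu)), mul_one]
  -- characterization of elements of I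
  have hIW : I ⊆ W := by rw [hI]; exact fun x hx => hx.1
  have hIchar : ∀ x ∈ I, ∃ u : V α, (¬∃ w, w ⋖ u) ∧
      x = (e u : ℝ) • zs (e u) ∧ wt x = (e u : ℝ) := by
    intro x hxI
    have hxI' := hxI
    rw [hI] at hxI'
    obtain ⟨hxW, u, hu_top, hu_init⟩ := hxI'
    by_cases hne : (T x).Nonempty
    · obtain ⟨mx, hmx, hmax⟩ := hmaxex x hxW hne
      have htopx := htop x hxW mx hmx hmax
      have humx : u = mx := heinj (by rw [hu_top, htopx])
      subst humx
      have hTsing : T x = {u} := by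
        apply Finset.eq_singleton_iff_unique_mem.mpr
        refine ⟨hmx, fun w hw => ?_⟩
        rcases eq_or_lt_of_le (hmax w hw) with h | h
        · exact h
        · obtain ⟨w', _, hw'⟩ := exists_cover_aux hfin h
          exact absurd ⟨w', hw'⟩ hu_init
      refine ⟨u, hu_init, ?_, ?_⟩
      · rw [hTrep x hxW, hTsing, Finset.sum_singleton, coefN_eq_self_aux e hu_init]
      · rw [hwtdef]
        simp only
        rw [hTsing, Finset.sum_singleton, coefN_eq_self_aux e hu_init]
    · exfalso
      rw [Finset.not_nonempty_iff_eq_empty] at hne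
      have : topIdx z x = 0 := by
        rw [topIdx, hsupp_z x hxW, hne]
        simp only [Finset.image_empty, Finset.coe_empty]
        rw [csSup_empty]
        rfl
      exact hepos u (by rw [hu_top, this])
  -- characterization of elements of W \ I
  have hDchar : ∀ x ∈ W, x ∉ I → (T x).Nonempty →
      ∃ mx w₀, mx ∈ T x ∧ w₀ ⋖ mx ∧ (e w₀ : ℝ) ≤ wt x ∧
        truncTop z zs x = ∑ u ∈ (T x).erase mx, (coefN e u : ℝ) • zs (e u) ∧
        ∀ u ∈ (T x).erase mx, u ≤ w₀ := by
    intro x hxW hxI hne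
    obtain ⟨mx, hmx, hmax⟩ := hmaxex x hxW hne
    have htopx := htop x hxW mx hmx hmax
    have hmx_not_init : ∃ w, w ⋖ mx := by
      by_contra hc
      exact hxI (by rw [hI]; exact ⟨hxW, mx, htopx.symm, hc⟩)
    obtain ⟨w₀, hw₀⟩ := hmx_not_init
    have hcoefmx : coefN e mx = e w₀ := coefN_eq_of_cov_aux hlin e hw₀
    refine ⟨mx, w₀, hmx, hw₀, ?_, ?_, ?_⟩
    · rw [hwtdef]
      simp only
      calc (e w₀ : ℝ) = (coefN e mx : ℝ) := by rw [hcoefmx]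
        _ ≤ ∑ u ∈ T x, (coefN e u : ℝ) :=
          Finset.single_le_sum (f := fun u => (coefN e u : ℝ)) (fun u _ => by positivity) hmx
    · rw [truncTop, htopx, heval_z_mem x hxW mx hmx]
      conv_lhs => rw [hTrep x hxW]
      rw [← Finset.add_sum_erase _ _ hmx]
      abel
    · intro u hu
      rw [Finset.mem_erase] at hu
      have hlt : u < mx := lt_of_le_of_ne (hmax u hu.2) hu.1
      obtain ⟨w', hw'le, hw'⟩ := exists_cover_aux hfin hlt
      rwa [cover_unique_aux hlin hw' hw₀] at hw'le
  have htrunc0 : ∀ x ∈ W, ¬(T x).Nonempty → x = 0 ∧ truncTop z zs x = 0 := by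
    intro x hxW hne
    rw [Finset.not_nonempty_iff_eq_empty] at hne
    have hx0 : x = 0 := by rw [hTrep x hxW, hne, Finset.sum_empty]
    refine ⟨hx0, ?_⟩
    rw [truncTop, hx0]
    simp
  -- finiteness of the low-weight part of I
  have heN : ∀ N : ℕ, {u : V α | e u ≤ N}.Finite := fun N =>
    Set.Finite.preimage heinj.injOn (Set.finite_le_nat N)
  have hFfin : ∀ N : ℕ, {x | x ∈ I ∧ wt x ≤ (N : ℝ)}.Finite := by
    intro N
    apply ((heN N).image (fun u => (e u : ℝ) • zs (e u))).subset
    rintro x ⟨hxI, hwtx⟩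
    obtain ⟨u, _, hx_eq, hwt_eq⟩ := hIchar x hxI
    refine ⟨u, ?_, hx_eq.symm⟩
    have : (e u : ℝ) ≤ (N : ℝ) := by rw [← hwt_eq]; exact hwtx
    exact_mod_cast this
  -- finiteness of the low-weight part of D
  have hGfin : ∀ N : ℕ, {y | ∃ x, (x ∈ W ∧ x ∉ I) ∧ truncTop z zs x = y ∧
      wt x ≤ (N : ℝ)}.Finite := by
    intro N
    have hQ : {u : V α | ∃ w₀, e w₀ ≤ N ∧ u ≤ w₀}.Finite := by
      have : {u : V α | ∃ w₀, e w₀ ≤ N ∧ u ≤ w₀} =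
          ⋃ w₀ ∈ {w : V α | e w ≤ N}, {u | u ≤ w₀} := by
        ext u
        simp only [Set.mem_setOf_eq, Set.mem_iUnion]
        constructor
        · rintro ⟨w₀, h1, h2⟩; exact ⟨w₀, h1, h2⟩
        · rintro ⟨w₀, h1, h2⟩; exact ⟨w₀, h1, h2⟩
      rw [this]
      exact Set.Finite.biUnion (heN N) (fun w₀ _ => hfin w₀)
    have hpow : {T' : Finset (V α) | ↑T' ⊆ {u : V α | ∃ w₀, e w₀ ≤ N ∧ u ≤ w₀}}.Finite := by
      apply (hQ.toFinset.powerset.finite_toSet).subset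
      intro T' hT'
      rw [Finset.mem_coe, Finset.mem_powerset]
      intro u hu
      rw [Set.Finite.mem_toFinset]
      exact hT' hu
    apply (hpow.image (fun T' => ∑ u ∈ T', (coefN e u : ℝ) • zs (e u))).subset
    rintro y ⟨x, ⟨hxW, hxI⟩, rfl, hwtx⟩
    by_cases hne : (T x).Nonempty
    · obtain ⟨mx, w₀, hmx, hcov, hew₀, htr, herase⟩ := hDchar x hxW hxI hne
      refine ⟨(T x).erase mx, ?_, htr.symm⟩
      intro u hu
      refine ⟨w₀, ?_, herase u hu⟩
      have : (e w₀ : ℝ) ≤ (N : ℝ) := le_trans hew₀ hwtx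
      exact_mod_cast this
    · exact ⟨∅, by simp, by rw [(htrunc0 x hxW hne).2]; simp⟩
  -- analysis setup
  obtain ⟨M, hM⟩ := hbdd
  have hM0 : 0 ≤ M := le_trans (norm_nonneg _) (hM 0)
  have hC0 : 0 ≤ C := by
    have h0 := hzC 0
    rw [Finset.range_zero, Finset.sum_empty, norm_zero] at h0
    exact h0
  set A : ℕ → Finset (StrongDual ℝ Z) := fun i => (hasupp i).toFinset with hAdef
  have hA_W : ∀ i x, x ∈ A i → x ∈ W := by
    intro i x hx
    exact haW i ((hasupp i).mem_toFinset.mp hx)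
  have hA_zero : ∀ i x, x ∉ A i → a i x = 0 := by
    intro i x hx
    by_contra hc
    exact hx ((hasupp i).mem_toFinset.mpr hc)
  have hA_sum : ∀ i, ∑ x ∈ A i, a i x = 1 := by
    intro i
    rw [← hasum i]
    exact (finsum_eq_sum_of_support_subset _ (by
      rw [Set.Finite.coe_toFinset])).symm
  set Si : ℕ → StrongDual ℝ Z → ℝ := fun i y =>
    ∑ x ∈ (A i).filter (fun x => (x ∈ W ∧ x ∉ I) ∧ truncTop z zs x = y), a i x with hSidef
  have hSi_nonneg : ∀ i y, 0 ≤ Si i y := fun i y =>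
    Finset.sum_nonneg fun x _ => hann i x
  have hSi_eq : ∀ i y, (∑ᶠ x ∈ {x | x ∈ W \ I ∧ truncTop z zs x = y}, a i x) = Si i y := by
    intro i y
    have hsf : ({x | x ∈ W \ I ∧ truncTop z zs x = y} ∩ Function.support (a i)).Finite :=
      (hasupp i).subset Set.inter_subset_right
    rw [finsum_mem_eq_sum _ hsf]
    apply Finset.sum_congr _ (fun _ _ => rfl)
    ext x
    simp only [Set.Finite.mem_toFinset, Set.mem_inter_iff, Set.mem_setOf_eq, Set.mem_diff,
      Function.mem_support, Finset.mem_filter, hAdef]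
    tauto
  -- the Markov-type bound
  have hKB : ∀ (i N : ℕ), 1 ≤ N →
      ∑ x ∈ (A i).filter (fun x => ¬ wt x ≤ (N : ℝ)), a i x ≤ M * C / N := by
    intro i N hN
    have hNpos : (0 : ℝ) < N := by exact_mod_cast hN
    set k : ℕ := (A i).sup (fun x => ((T x).sup e) + 1) with hkdef
    have hev : (∑ x ∈ A i, a i x * wt x) =
        (∑ᶠ x, a i x • x) (∑ j ∈ Finset.range k, z j) := by
      rw [finsum_eq_sum_of_support_subset (fun x => a i x • x) (s := A i) (by
        intro x hx
        rw [Function.mem_support] at hx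
        have : a i x ≠ 0 := fun h => hx (by rw [h, zero_smul])
        exact (hasupp i).mem_toFinset.mpr this)]
      rw [ContinuousLinearMap.sum_apply]
      apply Finset.sum_congr rfl
      intro x hx
      rw [ContinuousLinearMap.smul_apply, smul_eq_mul]
      congr 1
      apply Eq.symm
      apply hevalS x (hA_W i x hx) k
      intro u hu
      calc e u < (T x).sup e + 1 := Nat.lt_succ_of_le (Finset.le_sup hu)
        _ ≤ k := Finset.le_sup (f := fun x => ((T x).sup e) + 1) hx
    have hbound : (∑ x ∈ A i, a i x * wt x) ≤ M * C := by
      rw [hev]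
      calc (∑ᶠ x, a i x • x) (∑ j ∈ Finset.range k, z j)
          ≤ ‖(∑ᶠ x, a i x • x) (∑ j ∈ Finset.range k, z j)‖ := le_abs_self _
        _ ≤ ‖∑ᶠ x, a i x • x‖ * ‖∑ j ∈ Finset.range k, z j‖ :=
            ContinuousLinearMap.le_opNorm _ _
        _ ≤ M * C := mul_le_mul (hM i) (hzC k) (norm_nonneg _) hM0
    have h1 : (N : ℝ) * ∑ x ∈ (A i).filter (fun x => ¬ wt x ≤ (N : ℝ)), a i x ≤
        ∑ x ∈ (A i).filter (fun x => ¬ wt x ≤ (N : ℝ)), a i x * wt x := by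
      rw [Finset.mul_sum]
      apply Finset.sum_le_sum
      intro x hx
      rw [Finset.mem_filter] at hx
      have : (N : ℝ) ≤ wt x := le_of_lt (lt_of_not_ge hx.2)
      calc (N : ℝ) * a i x = a i x * (N : ℝ) := mul_comm _ _
        _ ≤ a i x * wt x := mul_le_mul_of_nonneg_left this (hann i x)
    have h2 : ∑ x ∈ (A i).filter (fun x => ¬ wt x ≤ (N : ℝ)), a i x * wt x ≤
        ∑ x ∈ A i, a i x * wt x :=
      Finset.sum_le_sum_of_subset_of_nonneg (Finset.filter_subset _ _)
        (fun x _ _ => mul_nonneg (hann i x) (hwt_nonneg x))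
    rw [le_div_iff₀ hNpos]
    calc (∑ x ∈ (A i).filter (fun x => ¬ wt x ≤ (N : ℝ)), a i x) * N
        = (N : ℝ) * ∑ x ∈ (A i).filter (fun x => ¬ wt x ≤ (N : ℝ)), a i x := mul_comm _ _
      _ ≤ M * C := le_trans h1 (le_trans h2 hbound)
  -- upper bound for each index
  have hUB : ∀ (i : ℕ) (FI FD : Finset (StrongDual ℝ Z)), ↑FI ⊆ I → ↑FD ⊆ D →
      (∑ x ∈ FI, a i x) + ∑ y ∈ FD, Si i y ≤ 1 := by
    intro i FI FD hFI _
    have hstep1 : ∑ x ∈ FI, a i x = ∑ x ∈ FI ∩ A i, a i x := by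
      apply (Finset.sum_subset Finset.inter_subset_left ?_).symm
      intro x _ hx
      exact hA_zero i x (fun h => hx (Finset.mem_inter.mpr ⟨‹x ∈ FI›, h⟩))
    set B : Finset (StrongDual ℝ Z) := FD.biUnion (fun y =>
      (A i).filter (fun x => (x ∈ W ∧ x ∉ I) ∧ truncTop z zs x = y)) with hBdef
    have hstep2 : ∑ y ∈ FD, Si i y = ∑ x ∈ B, a i x := by
      rw [hBdef]
      exact (Finset.sum_biUnion (fun y1 _ y2 _ hne => by
        apply Finset.disjoint_left.mpr
        intro x hx1 hx2
        rw [Finset.mem_filter] at hx1 hx2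
        exact hne (hx1.2.2 ▸ hx2.2.2))).symm
    have hdisj : Disjoint (FI ∩ A i) B := by
      apply Finset.disjoint_left.mpr
      intro x hx1 hx2
      rw [hBdef, Finset.mem_biUnion] at hx2
      obtain ⟨y, _, hx2⟩ := hx2
      rw [Finset.mem_filter] at hx2
      exact hx2.2.1.2 (hFI (Finset.mem_inter.mp hx1).1)
    rw [hstep1, hstep2, ← Finset.sum_union hdisj]
    rw [← hA_sum i]
    apply Finset.sum_le_sum_of_subset_of_nonneg
    · intro x hx
      rcases Finset.mem_union.mp hx with h | h
      · exact (Finset.mem_inter.mp h).2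
      · rw [hBdef, Finset.mem_biUnion] at h
        obtain ⟨y, _, h⟩ := h
        exact (Finset.mem_filter.mp h).1
    · intro x _ _
      exact hann i x
  -- lower bound for each index
  have hLB : ∀ (N : ℕ), 1 ≤ N → ∀ i : ℕ,
      1 ≤ (∑ x ∈ (hFfin N).toFinset, a i x) + (∑ y ∈ (hGfin N).toFinset, Si i y)
        + M * C / N := by
    intro N hN i
    have h0 : ∑ x ∈ (A i).filter (fun x => wt x ≤ (N : ℝ)), a i x
        + ∑ x ∈ (A i).filter (fun x => ¬ wt x ≤ (N : ℝ)), a i x = 1 := by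
      rw [Finset.sum_filter_add_sum_filter_not]
      exact hA_sum i
    set P1 := (A i).filter (fun x => wt x ≤ (N : ℝ)) with hP1def
    have hsplit2 : ∑ x ∈ P1.filter (fun x => x ∈ I), a i x
        + ∑ x ∈ P1.filter (fun x => ¬ x ∈ I), a i x = ∑ x ∈ P1, a i x :=
      Finset.sum_filter_add_sum_filter_not P1 _ _
    have hb1 : ∑ x ∈ P1.filter (fun x => x ∈ I), a i x ≤ ∑ x ∈ (hFfin N).toFinset, a i x := by
      apply Finset.sum_le_sum_of_subset_of_nonneg
      · intro x hx
        rw [Finset.mem_filter, hP1def, Finset.mem_filter] at hx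
        rw [Set.Finite.mem_toFinset]
        exact ⟨hx.2, hx.1.2⟩
      · intro x _ _; exact hann i x
    have hb2 : ∑ x ∈ P1.filter (fun x => ¬ x ∈ I), a i x
        ≤ ∑ y ∈ (hGfin N).toFinset, Si i y := by
      set B2 := P1.filter (fun x => ¬ x ∈ I) with hB2def
      have hmaps : ∀ x ∈ B2, truncTop z zs x ∈ (hGfin N).toFinset := by
        intro x hx
        rw [hB2def, Finset.mem_filter, hP1def, Finset.mem_filter] at hx
        rw [Set.Finite.mem_toFinset]
        exact ⟨x, ⟨hA_W i x hx.1.1, hx.2⟩, rfl, hx.1.2⟩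
      rw [← Finset.sum_fiberwise_of_maps_to hmaps (a i)]
      apply Finset.sum_le_sum
      intro y _
      apply Finset.sum_le_sum_of_subset_of_nonneg
      · intro x hx
        rw [Finset.mem_filter, hB2def, Finset.mem_filter, hP1def, Finset.mem_filter] at hx
        rw [Finset.mem_filter]
        exact ⟨hx.1.1.1, ⟨hA_W i x hx.1.1.1, hx.1.2⟩, hx.2⟩
      · intro x _ _; exact hann i x
    have hkb := hKB i N hN
    linarith
  -- nonnegativity of the limits
  have hp_nonneg : ∀ x ∈ W, 0 ≤ p x := fun x hx =>
    ge_of_tendsto (hp x hx) (Filter.Eventually.of_forall (fun i => hann i x))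
  have hsD_tend : ∀ y ∈ D, Filter.Tendsto (fun i => Si i y) Filter.atTop (nhds (s y)) :=
    fun y hy => (hs y hy).congr (fun i => hSi_eq i y)
  have hs_nonneg : ∀ y ∈ D, 0 ≤ s y := fun y hy =>
    ge_of_tendsto (hsD_tend y hy) (Filter.Eventually.of_forall (fun i => hSi_nonneg i y))
  have hpI0 : ∀ x, 0 ≤ I.indicator p x :=
    Set.indicator_nonneg (fun x hx => hp_nonneg x (hIW hx))
  have hsD0 : ∀ y, 0 ≤ D.indicator s y := Set.indicator_nonneg hs_nonneg
  -- pointwise limits of the indicator functions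
  have htend_I : ∀ x, Filter.Tendsto (fun i => I.indicator (a i) x) Filter.atTop
      (nhds (I.indicator p x)) := by
    intro x
    by_cases hx : x ∈ I
    · simp only [Set.indicator_of_mem hx]
      exact hp x (hIW hx)
    · simp only [Set.indicator_of_notMem hx]
      exact tendsto_const_nhds
  have htend_D : ∀ y, Filter.Tendsto (fun i => D.indicator (Si i) y) Filter.atTop
      (nhds (D.indicator s y)) := by
    intro y
    by_cases hy : y ∈ D
    · simp only [Set.indicator_of_mem hy]
      exact hsD_tend y hy
    · simp only [Set.indicator_of_notMem hy]
      exact tendsto_const_nhds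
  -- the global upper bound
  have hU : ∀ (E F : Finset (StrongDual ℝ Z)),
      (∑ x ∈ E, I.indicator p x) + (∑ y ∈ F, D.indicator s y) ≤ 1 := by
    intro E F
    have hlim : Filter.Tendsto
        (fun i => (∑ x ∈ E, I.indicator (a i) x) + ∑ y ∈ F, D.indicator (Si i) y)
        Filter.atTop
        (nhds ((∑ x ∈ E, I.indicator p x) + ∑ y ∈ F, D.indicator s y)) :=
      Filter.Tendsto.add (tendsto_finset_sum E (fun x _ => htend_I x))
        (tendsto_finset_sum F (fun y _ => htend_D y))
    apply le_of_tendsto hlim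
    apply Filter.Eventually.of_forall
    intro i
    rw [sum_indicator_eq_sum_filter_aux, sum_indicator_eq_sum_filter_aux]
    apply hUB i
    · exact fun x hx => (Finset.mem_filter.mp (Finset.mem_coe.mp hx)).2
    · exact fun y hy => (Finset.mem_filter.mp (Finset.mem_coe.mp hy)).2
  -- summability
  have hPsum : Summable (I.indicator p) :=
    summable_of_sum_le (Pi.le_def.mpr hpI0) (fun u => by
      have := hU u ∅; simpa using this)
  have hSsum : Summable (D.indicator s) :=
    summable_of_sum_le (Pi.le_def.mpr hsD0) (fun u => by
      have := hU ∅ u; simpa using this)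
  -- the global upper bound on the tsums
  have hstep : ∀ F : Finset (StrongDual ℝ Z),
      (∑' x, I.indicator p x) + ∑ y ∈ F, D.indicator s y ≤ 1 := by
    intro F
    have h1 : (∑' x, I.indicator p x) ≤ 1 - ∑ y ∈ F, D.indicator s y :=
      Summable.tsum_le_of_sum_le hPsum (fun E => by linarith [hU E F])
    linarith
  have hSle : (∑' y, D.indicator s y) ≤ 1 - ∑' x, I.indicator p x :=
    Summable.tsum_le_of_sum_le hSsum (fun F => by linarith [hstep F])
  -- the global lower bound on the tsums
  have hLow : ∀ N : ℕ, 1 ≤ N →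
      1 ≤ (∑' x, I.indicator p x) + (∑' y, D.indicator s y) + M * C / N := by
    intro N hN
    have hFNI : ∀ x ∈ (hFfin N).toFinset, x ∈ I := fun x hx =>
      ((hFfin N).mem_toFinset.mp hx).1
    have hGND : ∀ y ∈ (hGfin N).toFinset, y ∈ D := by
      intro y hy
      obtain ⟨x, ⟨hxW, hxI⟩, rfl, _⟩ := (hGfin N).mem_toFinset.mp hy
      rw [hD]
      exact ⟨x, ⟨hxW, hxI⟩, rfl⟩
    have hlim : Filter.Tendsto
        (fun i => (∑ x ∈ (hFfin N).toFinset, a i x) + (∑ y ∈ (hGfin N).toFinset, Si i y)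
          + M * C / N)
        Filter.atTop
        (nhds ((∑ x ∈ (hFfin N).toFinset, p x) + (∑ y ∈ (hGfin N).toFinset, s y)
          + M * C / N)) :=
      Filter.Tendsto.add
        (Filter.Tendsto.add
          (tendsto_finset_sum _ (fun x hx => hp x (hIW (hFNI x hx))))
          (tendsto_finset_sum _ (fun y hy => hsD_tend y (hGND y hy))))
        tendsto_const_nhds
    have h1 : 1 ≤ (∑ x ∈ (hFfin N).toFinset, p x) + (∑ y ∈ (hGfin N).toFinset, s y)
        + M * C / N :=
      ge_of_tendsto hlim (Filter.Eventually.of_forall (hLB N hN))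
    have h2 : ∑ x ∈ (hFfin N).toFinset, p x ≤ ∑' x, I.indicator p x := by
      have heq : ∑ x ∈ (hFfin N).toFinset, p x = ∑ x ∈ (hFfin N).toFinset, I.indicator p x :=
        Finset.sum_congr rfl (fun x hx => (Set.indicator_of_mem (hFNI x hx) p).symm)
      rw [heq]
      exact Summable.sum_le_tsum _ (fun x _ => hpI0 x) hPsum
    have h3 : ∑ y ∈ (hGfin N).toFinset, s y ≤ ∑' y, D.indicator s y := by
      have heq : ∑ y ∈ (hGfin N).toFinset, s y = ∑ y ∈ (hGfin N).toFinset, D.indicator s y :=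
        Finset.sum_congr rfl (fun y hy => (Set.indicator_of_mem (hGND y hy) s).symm)
      rw [heq]
      exact Summable.sum_le_tsum _ (fun y _ => hsD0 y) hSsum
    linarith
  -- conclusion
  have hfinal : (∑' x, I.indicator p x) + (∑' y, D.indicator s y) = 1 := by
    apply le_antisymm
    · linarith [hSle]
    · apply le_of_forall_pos_le_add
      intro ε hε
      obtain ⟨n, hn⟩ := exists_nat_gt (M * C / ε)
      have hN1 : 1 ≤ n + 1 := Nat.le_add_left 1 n
      have hpos : (0 : ℝ) < ((n + 1 : ℕ) : ℝ) := by positivity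
      have hdiv : M * C / ((n + 1 : ℕ) : ℝ) ≤ ε := by
        rw [div_le_iff₀ hpos]
        have hlt : M * C / ε < ((n + 1 : ℕ) : ℝ) := lt_of_lt_of_le hn (by push_cast; linarith)
        calc M * C = (M * C / ε) * ε := (div_mul_cancel₀ _ (ne_of_gt hε)).symm
          _ ≤ ((n + 1 : ℕ) : ℝ) * ε := mul_le_mul_of_nonneg_right hlt.le (le_of_lt hε)
          _ = ε * ((n + 1 : ℕ) : ℝ) := mul_comm _ _
      linarith [hLow (n + 1) hN1]
  rw [tsum_subtype I (fun x => p x), tsum_subtype D (fun y => s y)]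
  exact hfinal


end Paper
end
end

section
/- If the sequence of convex combinations (Σ_{x∈W} a_{x,i} x)_{i=1}^∞ is bounded in norm in Z*, then the series Σ_{x∈W} p_x x and Σ_{x∈I} p_x x converge strongly (in norm) in Z*, the series Σ_{y∈D} s_y y converges strongly in Z*, and consequently the series Σ_{y∈D} (s_y − Σ_{x : v(x)≻v(y)} p_x) y converges strongly in Z* (note s_y ≥ Σ_{x : v(x)≻v(y)} p_x for every y ∈ D). -/
open Set Filter Topology

noncomputable section

namespace Paper

set_option maxHeartbeats 2000000 in
theorem statement18
    (V : Ordinal → Type) [∀ γ : Ordinal, PartialOrder (V γ)]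
    (seq : Ordinal → ℕ → Ordinal)
    (hV0 : ∀ x y : V 0, x = y) (hV0ne : Nonempty (V 0))
    (hchainfin : ∀ γ : Ordinal, γ.card ≤ Cardinal.aleph0 → ∀ x : V γ, {y : V γ | y ≤ x}.Finite)
    (hchainlin : ∀ γ : Ordinal, γ.card ≤ Cardinal.aleph0 →
      ∀ x y w : V γ, y ≤ x → w ≤ x → y ≤ w ∨ w ≤ y)
    (hseqmono : ∀ γ : Ordinal, γ.card ≤ Cardinal.aleph0 → Order.IsSuccLimit γ → StrictMono (seq γ))
    (hseqsucc : ∀ γ : Ordinal, γ.card ≤ Cardinal.aleph0 → Order.IsSuccLimit γ →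
      ∀ n : ℕ, ∃ δ : Ordinal, seq γ n = δ + 1)
    (hseqlt : ∀ γ : Ordinal, γ.card ≤ Cardinal.aleph0 → Order.IsSuccLimit γ → ∀ n : ℕ, seq γ n < γ)
    (hseqcof : ∀ γ : Ordinal, γ.card ≤ Cardinal.aleph0 → Order.IsSuccLimit γ →
      ∀ δ : Ordinal, δ < γ → ∃ n : ℕ, δ < seq γ n)
    (hsucc : ∀ γ : Ordinal, γ.card ≤ Cardinal.aleph0 → (γ = 0 ∨ ∃ δ : Ordinal, γ = δ + 1) →
      Nonempty (V (γ + 1) ≃o WithBot (Σ _ : ℕ, V γ)))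
    (hlimsucc : ∀ γ : Ordinal, γ.card ≤ Cardinal.aleph0 → Order.IsSuccLimit γ →
      Nonempty (V (γ + 1) ≃o WithBot (V γ)))
    (hlim : ∀ γ : Ordinal, γ.card ≤ Cardinal.aleph0 → Order.IsSuccLimit γ →
      Nonempty (V γ ≃o (Σ n : ℕ, V (seq γ n))))
    {Z : Type*} [NormedAddCommGroup Z] [NormedSpace ℝ Z] [CompleteSpace Z]
    (z : ℕ → Z) (zs : ℕ → StrongDual ℝ Z) (C K : ℝ)
    (hz1 : ∀ i : ℕ, 1 ≤ ‖z i‖)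
    (hzC : ∀ k : ℕ, ‖∑ i ∈ Finset.range k, z i‖ ≤ C)
    (hbasic : ∀ m n : ℕ, m ≤ n → ∀ a : ℕ → ℝ,
      ‖∑ i ∈ Finset.range m, a i • z i‖ ≤ K * ‖∑ i ∈ Finset.range n, a i • z i‖)
    (hspan : (Submodule.span ℝ (Set.range z)).topologicalClosure = ⊤)
    (hbi : ∀ i j : ℕ, zs j (z i) = if i = j then (1 : ℝ) else 0)
    (α : Ordinal) (hαc : α.card ≤ Cardinal.aleph0)
    (e : V α → ℕ) (heinj : Function.Injective e)
    (hemono : ∀ x y : V α, x < y → e x < e y)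
    (hepos : ∀ x : V α, e x ≠ 0)
    (β : Ordinal) (hβ : β ≤ α)
    (W : Set (StrongDual ℝ Z)) (hW : W = (⋃ γ : Ordinal, ⋃ _ : γ ≤ β, XsetOf e zs (derIter (Set.univ : Set (V α)) γ)))
    (I : Set (StrongDual ℝ Z))
    (hI : I = {x | x ∈ W ∧ ∃ u : V α, e u = topIdx z x ∧ ¬∃ w, w ⋖ u})
    (D : Set (StrongDual ℝ Z)) (hD : D = truncTop z zs '' (W \ I))
    (a : ℕ → StrongDual ℝ Z → ℝ)
    (hasupp : ∀ i : ℕ, (Function.support (a i)).Finite)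
    (haW : ∀ i : ℕ, Function.support (a i) ⊆ W)
    (hann : ∀ (i : ℕ) (x : StrongDual ℝ Z), 0 ≤ a i x)
    (hasum : ∀ i : ℕ, ∑ᶠ x, a i x = 1)
    (p : StrongDual ℝ Z → ℝ)
    (hp : ∀ x ∈ W, Filter.Tendsto (fun i => a i x) Filter.atTop (nhds (p x)))
    (s : StrongDual ℝ Z → ℝ)
    (hs : ∀ y ∈ D, Filter.Tendsto
      (fun i => ∑ᶠ x ∈ {x | x ∈ W \ I ∧ truncTop z zs x = y}, a i x)
      Filter.atTop (nhds (s y)))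
    (hbdd : ∃ M : ℝ, ∀ i : ℕ, ‖∑ᶠ x, a i x • x‖ ≤ M) :
    Summable (fun x : ↥W => p x.1 • x.1) ∧
    Summable (fun x : ↥I => p x.1 • x.1) ∧
    Summable (fun y : ↥D => s y.1 • y.1) ∧
    Summable (fun y : ↥D =>
      (s y.1 - ∑' x : ↥{x | x ∈ W \ I ∧ truncTop z zs x = y.1}, p x.1) • y.1) ∧
    ∀ y ∈ D, (∑' x : ↥{x | x ∈ W \ I ∧ truncTop z zs x = y}, p x.1) ≤ s y := by
  classical
  obtain ⟨M, hM⟩ := hbdd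
  have hC0 : (0:ℝ) ≤ C := by have := hzC 0; simp only [Finset.range_zero, Finset.sum_empty, norm_zero] at this; exact this
  have hK1 : (1:ℝ) ≤ K := by
    have h := hbasic 1 1 le_rfl (fun _ => 1)
    simp only [Finset.range_one, Finset.sum_singleton, one_smul] at h
    nlinarith [hz1 0, norm_nonneg (z 0)]
  have hM0 : (0:ℝ) ≤ M := le_trans (norm_nonneg _) (hM 0)
  have h2K : (0:ℝ) ≤ 2 * K := by linarith
  -- bound on the biorthogonal functionals
  have hzs : ∀ n, ‖zs n‖ ≤ 2 * K := by
    intro n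
    refine ContinuousLinearMap.opNorm_le_bound _ h2K ?_
    intro w
    have hcl : ∀ v : Z, v ∈ closure (Submodule.span ℝ (Set.range z) : Set Z) := by
      intro v
      have h1 : ((Submodule.span ℝ (Set.range z)).topologicalClosure : Set Z) = Set.univ := by
        rw [hspan]; rfl
      rw [Submodule.topologicalClosure_coe] at h1
      rw [h1]; trivial
    have hclosed : IsClosed {v : Z | ‖zs n v‖ ≤ 2 * K * ‖v‖} := by
      apply isClosed_le
      · exact ((zs n).continuous.norm)
      · exact (continuous_const.mul continuous_norm)
    have hsub : (Submodule.span ℝ (Set.range z) : Set Z) ⊆ {v : Z | ‖zs n v‖ ≤ 2 * K * ‖v‖} := by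
      intro v hv
      rw [SetLike.mem_coe, Finsupp.mem_span_range_iff_exists_finsupp] at hv
      obtain ⟨c, hc⟩ := hv
      set N := c.support.sup id + 1 with hN
      have hvrep : v = ∑ i ∈ Finset.range N, c i • z i := by
        rw [← hc, Finsupp.sum]
        refine Finset.sum_subset ?_ ?_
        · intro i hi
          rw [Finset.mem_range]
          exact Nat.lt_succ_of_le (Finset.le_sup (f := id) hi)
        · intro i _ hi
          rw [Finsupp.notMem_support_iff.mp hi, zero_smul]
      have hval : zs n v = if n ∈ Finset.range N then c n else 0 := by
        conv_lhs => rw [hvrep]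
        rw [map_sum]
        rw [Finset.sum_congr rfl (fun i _ => by
          rw [map_smul, hbi i n, smul_eq_mul, mul_ite, mul_one, mul_zero])]
        exact Finset.sum_ite_eq' _ _ _
      by_cases hn : n ∈ Finset.range N
      · rw [Set.mem_setOf_eq, hval, if_pos hn]
        have hn' : n < N := Finset.mem_range.mp hn
        have h1 : ‖c n • z n‖ ≤ 2 * K * ‖v‖ := by
          have heq : c n • z n = (∑ i ∈ Finset.range (n+1), c i • z i)
              - ∑ i ∈ Finset.range n, c i • z i := by
            rw [Finset.sum_range_succ]; abel
          rw [heq]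
          have b1 := hbasic (n+1) N hn' (fun i => c i)
          have b2 := hbasic n N (Nat.le_of_lt hn') (fun i => c i)
          rw [← hvrep] at b1 b2
          calc ‖(∑ i ∈ Finset.range (n+1), c i • z i) - ∑ i ∈ Finset.range n, c i • z i‖
              ≤ ‖∑ i ∈ Finset.range (n+1), c i • z i‖ + ‖∑ i ∈ Finset.range n, c i • z i‖ :=
                norm_sub_le _ _
            _ ≤ K * ‖v‖ + K * ‖v‖ := add_le_add b1 b2
            _ = 2 * K * ‖v‖ := by ring
        have h2 : ‖(c n : ℝ)‖ ≤ ‖c n • z n‖ := by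
          rw [norm_smul]
          nlinarith [hz1 n, norm_nonneg (c n : ℝ)]
        exact le_trans h2 h1
      · rw [Set.mem_setOf_eq, hval, if_neg hn, norm_zero]
        positivity
    exact closure_minimal hsub hclosed (hcl w)
  -- the structural predicate
  set Good : StrongDual ℝ Z → Prop := fun x =>
    ∃ T : Finset ℕ, (∀ m, 0 ≤ x (z m)) ∧ (∀ m, m ∉ T → x (z m) = 0) ∧
      x = ∑ n ∈ T, x (z n) • zs n with hGood
  set sig : StrongDual ℝ Z → ℝ := fun x => ∑ᶠ n, x (z n) with hsig
  have hGsig : ∀ (x : StrongDual ℝ Z) (T : Finset ℕ),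
      (∀ m, m ∉ T → x (z m) = 0) → sig x = ∑ n ∈ T, x (z n) := by
    intro x T hT
    exact finsum_eq_sum_of_support_subset _ (fun m hm => by
      by_contra h; exact hm (hT m h))
  have hGnn : ∀ x, Good x → 0 ≤ sig x := by
    intro x ⟨T, h1, h2, h3⟩
    rw [hGsig x T h2]
    exact Finset.sum_nonneg fun n _ => h1 n
  have hGnorm : ∀ x, Good x → ‖x‖ ≤ 2 * K * sig x := by
    intro x hGx
    obtain ⟨T, h1, h2, h3⟩ := hGx
    rw [hGsig x T h2, Finset.mul_sum]
    conv_lhs => rw [h3]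
    refine le_trans (norm_sum_le _ _) (Finset.sum_le_sum ?_)
    intro n _
    rw [norm_smul, Real.norm_eq_abs, abs_of_nonneg (h1 n), mul_comm (2*K) _]
    exact mul_le_mul_of_nonneg_left (hzs n) (h1 n)
  have hGeval0 : ∀ x : StrongDual ℝ Z, ∃ k0 : ℕ, ∀ k, k0 ≤ k → Good x →
      x (∑ n ∈ Finset.range k, z n) = sig x := by
    intro x
    by_cases hx : Good x
    · obtain ⟨T, h1, h2, h3⟩ := hx
      refine ⟨T.sup id + 1, fun k hk _ => ?_⟩
      rw [map_sum, hGsig x T h2]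
      refine (Finset.sum_subset ?_ ?_).symm
      · intro n hn
        rw [Finset.mem_range]
        exact lt_of_lt_of_le (Nat.lt_succ_of_le (Finset.le_sup (f := id) hn)) hk
      · intro n _ hn
        exact h2 n hn
    · exact ⟨0, fun k _ h => absurd h hx⟩
  choose κ hκ using hGeval0
  have hRep : ∀ (x : StrongDual ℝ Z) (F : Finset (V α)),
      x = (∑ u ∈ F, (coefN e u : ℝ) • zs (e u)) → Good x := by
    intro x F hx
    have hcoord : ∀ m, x (z m) = ∑ u ∈ F, (if e u = m then (coefN e u : ℝ) else 0) := by
      intro m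
      rw [hx, ContinuousLinearMap.sum_apply]
      refine Finset.sum_congr rfl (fun u _ => ?_)
      rw [ContinuousLinearMap.smul_apply, hbi m (e u), smul_eq_mul, mul_ite, mul_one, mul_zero]
      exact if_congr (by constructor <;> intro h <;> exact h.symm) rfl rfl
    refine ⟨F.image e, ?_, ?_, ?_⟩
    · intro m
      rw [hcoord m]
      refine Finset.sum_nonneg (fun u _ => ?_)
      split
      · positivity
      · exact le_refl 0
    · intro m hm
      rw [hcoord m]
      refine Finset.sum_eq_zero (fun u hu => ?_)
      rw [if_neg]
      intro hem
      exact hm (Finset.mem_image.mpr ⟨u, hu, hem⟩)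
    · rw [Finset.sum_image (fun u _ u' _ h => heinj h)]
      conv_lhs => rw [hx]
      refine Finset.sum_congr rfl (fun u hu => ?_)
      congr 1
      rw [hcoord (e u)]
      rw [Finset.sum_eq_single_of_mem u hu (fun u' _ hne => if_neg (fun h => hne (heinj h)))]
      rw [if_pos rfl]
  have hGW : ∀ x ∈ W, Good x := by
    intro x hx
    rw [hW] at hx
    simp only [Set.mem_iUnion] at hx
    obtain ⟨γ, _, v, _, hxv⟩ := hx
    set S := derIter (Set.univ : Set (V α)) γ with hS
    have hfin : ({w : V α | w ≤ v} ∩ S ∩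
        Function.support (fun u => (coefN e u : ℝ) • zs (e u))).Finite :=
      ((hchainfin α hαc v).subset (Set.inter_subset_left.trans Set.inter_subset_left))
    have hxe : x = ∑ u ∈ hfin.toFinset, (coefN e u : ℝ) • zs (e u) := by
      rw [hxv]
      exact finsum_mem_eq_sum _ hfin
    exact hRep x _ hxe
  have hGD : ∀ x, Good x → Good (truncTop z zs x) ∧ sig (truncTop z zs x) ≤ sig x := by
    intro x hGx
    obtain ⟨T, h1, h2, h3⟩ := hGx
    set t := topIdx z x with ht
    have hyc : ∀ m, (truncTop z zs x) (z m) = if m = t then 0 else x (z m) := by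
      intro m
      rw [truncTop, ContinuousLinearMap.sub_apply, ContinuousLinearMap.smul_apply,
        hbi m t, smul_eq_mul, mul_ite, mul_one, mul_zero]
      split
      · next h => rw [h]; ring
      · ring
    have hGy : Good (truncTop z zs x) := by
      refine ⟨T, ?_, ?_, ?_⟩
      · intro m
        rw [hyc m]
        split
        · exact le_refl 0
        · exact h1 m
      · intro m hm
        rw [hyc m]
        split
        · rfl
        · exact h2 m hm
      · have hterm : ∀ n ∈ T, (truncTop z zs x) (z n) • zs n =
            x (z n) • zs n - (if n = t then x (z t) • zs n else 0) := by
          intro n _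
          rw [hyc n]
          split
          · next h => rw [h]; simp
          · simp
        rw [Finset.sum_congr rfl hterm, Finset.sum_sub_distrib, ← h3,
          Finset.sum_ite_eq' T t (fun n => x (z t) • zs n)]
        by_cases hT : t ∈ T
        · rw [if_pos hT, truncTop]
        · rw [if_neg hT, truncTop, h2 t hT]
          simp
    refine ⟨hGy, ?_⟩
    obtain ⟨T', g1, g2, g3⟩ := hGy
    have g2' : ∀ m, m ∉ T → (truncTop z zs x) (z m) = 0 := by
      intro m hm
      rw [hyc m]
      split
      · rfl
      · exact h2 m hm
    rw [hGsig _ T g2', hGsig x T h2]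
    refine Finset.sum_le_sum (fun n _ => ?_)
    rw [hyc n]
    split
    · exact h1 n
    · exact le_refl _
  have hp0 : ∀ x ∈ W, 0 ≤ p x := fun x hx => ge_of_tendsto' (hp x hx) (fun i => hann i x)
  -- the master per-i bound
  have hkey : ∀ i, ∑ x ∈ (hasupp i).toFinset, a i x * sig x ≤ M * C := by
    intro i
    set T := (hasupp i).toFinset with hT
    set k := T.sup κ with hk
    set w := ∑ n ∈ Finset.range k, z n with hw
    have hmemW : ∀ x ∈ T, x ∈ W := fun x hx => haW i ((hasupp i).mem_toFinset.mp hx)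
    have hfi : (∑ᶠ x, a i x • x) = ∑ x ∈ T, a i x • x := by
      refine finsum_eq_sum_of_support_subset _ (fun x hx => ?_)
      rw [hT, Set.Finite.coe_toFinset]
      intro h
      apply hx
      simp only [Function.mem_support, ne_eq, not_not] at h ⊢
      rw [h, zero_smul]
    have h1 : (∑ x ∈ T, a i x • x) w = ∑ x ∈ T, a i x * sig x := by
      rw [ContinuousLinearMap.sum_apply]
      refine Finset.sum_congr rfl (fun x hx => ?_)
      rw [ContinuousLinearMap.smul_apply, smul_eq_mul]
      congr 1
      exact hκ x k (Finset.le_sup hx) (hGW x (hmemW x hx))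
    have h2 : ‖(∑ x ∈ T, a i x • x)‖ ≤ M := by rw [← hfi]; exact hM i
    calc ∑ x ∈ T, a i x * sig x = (∑ x ∈ T, a i x • x) w := h1.symm
      _ ≤ |(∑ x ∈ T, a i x • x) w| := le_abs_self _
      _ = ‖(∑ x ∈ T, a i x • x) w‖ := (Real.norm_eq_abs _).symm
      _ ≤ ‖(∑ x ∈ T, a i x • x)‖ * ‖w‖ := ContinuousLinearMap.le_opNorm _ _
      _ ≤ M * C := mul_le_mul h2 (hzC k) (norm_nonneg _) hM0
  have hsuppW : ∀ i, ∀ x ∈ (hasupp i).toFinset, x ∈ W := by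
    intro i x hx
    exact haW i ((hasupp i).mem_toFinset.mp hx)
  -- Fatou bound on W
  have hFatou : ∀ F : Finset (StrongDual ℝ Z), (↑F ⊆ W) →
      ∑ x ∈ F, p x * sig x ≤ M * C := by
    intro F hF
    have hlim : Tendsto (fun i => ∑ x ∈ F, a i x * sig x) atTop
        (𝓝 (∑ x ∈ F, p x * sig x)) :=
      tendsto_finset_sum _ (fun x hx => (hp x (hF hx)).mul_const _)
    refine le_of_tendsto' hlim (fun i => ?_)
    have h1 : ∑ x ∈ F, a i x * sig x = ∑ x ∈ F ∩ (hasupp i).toFinset, a i x * sig x := by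
      refine (Finset.sum_subset Finset.inter_subset_left (fun x hx hnx => ?_)).symm
      have : a i x = 0 := by
        by_contra h
        exact hnx (Finset.mem_inter.mpr ⟨hx, (hasupp i).mem_toFinset.mpr h⟩)
      rw [this, zero_mul]
    rw [h1]
    refine le_trans (Finset.sum_le_sum_of_subset_of_nonneg Finset.inter_subset_right
      (fun x hx _ => mul_nonneg (hann i x)
        (hGnn x (hGW x (hsuppW i x hx))))) (hkey i)
  have hnormW : Summable (fun x : ↥W => ‖p x.1 • x.1‖) := by
    refine summable_of_sum_le (c := 2 * K * (M * C)) (fun x => norm_nonneg _) (fun u => ?_)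
    have h1 : ∀ x : ↥W, x ∈ u → ‖p x.1 • x.1‖ ≤ 2 * K * (p x.1 * sig x.1) := by
      intro x _
      rw [norm_smul, Real.norm_eq_abs, abs_of_nonneg (hp0 x.1 x.2)]
      calc p x.1 * ‖x.1‖ ≤ p x.1 * (2 * K * sig x.1) :=
            mul_le_mul_of_nonneg_left (hGnorm x.1 (hGW x.1 x.2)) (hp0 x.1 x.2)
        _ = 2 * K * (p x.1 * sig x.1) := by ring
    refine le_trans (Finset.sum_le_sum h1) ?_
    rw [← Finset.mul_sum]
    refine mul_le_mul_of_nonneg_left ?_ h2K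
    have h2 : ∑ x ∈ u, p x.1 * sig x.1 =
        ∑ y ∈ u.image (Subtype.val), p y * sig y := by
      rw [Finset.sum_image (fun x _ x' _ h => Subtype.ext h)]
    rw [h2]
    refine hFatou _ (fun y hy => ?_)
    simp only [Finset.coe_image, Set.mem_image, Finset.mem_coe] at hy
    obtain ⟨x, _, rfl⟩ := hy
    exact x.2
  have hSummableW : Summable (fun x : ↥W => p x.1 • x.1) := hnormW.of_norm
  have hIW : I ⊆ W := by rw [hI]; intro x hx; exact hx.1
  have hSummableI : Summable (fun x : ↥I => p x.1 • x.1) := by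
    have := hSummableW.comp_injective (Set.inclusion_injective hIW)
    exact this
  -- D facts
  have hGDmem : ∀ y ∈ D, Good y := by
    rw [hD]; rintro y ⟨x, hx, rfl⟩; exact (hGD x (hGW x hx.1)).1
  have hs0 : ∀ y ∈ D, 0 ≤ s y := by
    intro y hy
    refine ge_of_tendsto' (hs y hy) (fun i => ?_)
    rw [finsum_mem_def]
    exact finsum_nonneg fun x => Set.indicator_apply_nonneg (fun _ => hann i x)
  have hgroup : ∀ (i : ℕ) (y : StrongDual ℝ Z),
      (∑ᶠ x ∈ {x | x ∈ W \ I ∧ truncTop z zs x = y}, a i x) =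
      ∑ x ∈ (hasupp i).toFinset.filter (fun x => x ∈ W \ I ∧ truncTop z zs x = y), a i x := by
    intro i y
    have hsupp : Function.support (Set.indicator {x | x ∈ W \ I ∧ truncTop z zs x = y} (a i))
        ⊆ ((hasupp i).toFinset.filter
          (fun x => x ∈ W \ I ∧ truncTop z zs x = y) : Finset (StrongDual ℝ Z)) := by
      intro x hx
      rw [Function.mem_support] at hx
      have hx1 : x ∈ {x | x ∈ W \ I ∧ truncTop z zs x = y} := by
        by_contra h
        rw [Set.indicator_of_notMem h] at hx
        exact hx rfl
      have hx2 : a i x ≠ 0 := by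
        rw [Set.indicator_of_mem hx1] at hx
        exact hx
      simp only [Finset.coe_filter, Set.mem_setOf_eq]
      exact ⟨(hasupp i).mem_toFinset.mpr hx2, hx1⟩
    rw [finsum_mem_def, finsum_eq_sum_of_support_subset _ hsupp]
    refine Finset.sum_congr rfl (fun x hx => Set.indicator_of_mem ?_ (a i))
    exact (Finset.mem_filter.mp hx).2
  have hDkey : ∀ F : Finset (StrongDual ℝ Z), (↑F ⊆ D) →
      ∑ y ∈ F, s y * ‖y‖ ≤ 2 * K * (M * C) := by
    intro F hF
    have hlim : Tendsto (fun i => ∑ y ∈ F,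
        (∑ᶠ x ∈ {x | x ∈ W \ I ∧ truncTop z zs x = y}, a i x) * ‖y‖)
        atTop (𝓝 (∑ y ∈ F, s y * ‖y‖)) :=
      tendsto_finset_sum _ (fun y hy => (hs y (hF hy)).mul_const _)
    refine le_of_tendsto' hlim (fun i => ?_)
    have h1 : ∀ y ∈ F, (∑ᶠ x ∈ {x | x ∈ W \ I ∧ truncTop z zs x = y}, a i x) * ‖y‖ =
        ∑ x ∈ (hasupp i).toFinset.filter (fun x => x ∈ W \ I ∧ truncTop z zs x = y),
          a i x * ‖y‖ := by
      intro y _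
      rw [hgroup i y, Finset.sum_mul]
    rw [Finset.sum_congr rfl h1]
    have h2 : ∀ y ∈ F,
        (∑ x ∈ (hasupp i).toFinset.filter (fun x => x ∈ W \ I ∧ truncTop z zs x = y),
          a i x * ‖y‖) ≤
        ∑ x ∈ (hasupp i).toFinset.filter (fun x => x ∈ W \ I ∧ truncTop z zs x = y),
          a i x * (2 * K * sig x) := by
      intro y _
      refine Finset.sum_le_sum (fun x hx => ?_)
      obtain ⟨hxT, hxWI, hxy⟩ := Finset.mem_filter.mp hx
      have hGx : Good x := hGW x hxWI.1
      have hbnd : ‖y‖ ≤ 2 * K * sig x := by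
        rw [← hxy]
        exact le_trans (hGnorm _ (hGD x hGx).1)
          (mul_le_mul_of_nonneg_left (hGD x hGx).2 h2K)
      exact mul_le_mul_of_nonneg_left hbnd (hann i x)
    refine le_trans (Finset.sum_le_sum h2) ?_
    have hdisj : (↑F : Set (StrongDual ℝ Z)).PairwiseDisjoint
        (fun y => (hasupp i).toFinset.filter
          (fun x => x ∈ W \ I ∧ truncTop z zs x = y)) := by
      intro y _ y' _ hne
      refine Finset.disjoint_left.mpr (fun x hx hx' => ?_)
      exact hne (((Finset.mem_filter.mp hx).2.2).symm.trans ((Finset.mem_filter.mp hx').2.2))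
    rw [← Finset.sum_biUnion hdisj]
    refine le_trans (Finset.sum_le_sum_of_subset_of_nonneg
      (fun x hx => (Finset.mem_filter.mp (Finset.mem_biUnion.mp hx).choose_spec.2).1)
      (fun x hx _ => mul_nonneg (hann i x)
        (mul_nonneg h2K (hGnn x (hGW x (hsuppW i x hx)))))) ?_
    have h3 : ∑ x ∈ (hasupp i).toFinset, a i x * (2 * K * sig x) =
        2 * K * ∑ x ∈ (hasupp i).toFinset, a i x * sig x := by
      rw [Finset.mul_sum]
      exact Finset.sum_congr rfl (fun x _ => by ring)
    rw [h3]
    exact mul_le_mul_of_nonneg_left (hkey i) h2K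
  have hnormD : Summable (fun y : ↥D => ‖s y.1 • y.1‖) := by
    refine summable_of_sum_le (c := 2 * K * (M * C)) (fun y => norm_nonneg _) (fun u => ?_)
    have h1 : ∀ y : ↥D, y ∈ u → ‖s y.1 • y.1‖ = s y.1 * ‖y.1‖ := fun y _ => by
      rw [norm_smul, Real.norm_eq_abs, abs_of_nonneg (hs0 y.1 y.2)]
    rw [Finset.sum_congr rfl h1]
    have h2 : ∑ y ∈ u, s y.1 * ‖y.1‖ = ∑ v ∈ u.image Subtype.val, s v * ‖v‖ := by
      rw [Finset.sum_image (fun x _ x' _ h => Subtype.ext h)]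
    rw [h2]
    refine hDkey _ (fun v hv => ?_)
    simp only [Finset.coe_image, Set.mem_image, Finset.mem_coe] at hv
    obtain ⟨x, _, rfl⟩ := hv
    exact x.2
  have hSummableD : Summable (fun y : ↥D => s y.1 • y.1) := hnormD.of_norm
  -- part 5
  have hpart5 : ∀ y ∈ D, (∑' x : ↥{x | x ∈ W \ I ∧ truncTop z zs x = y}, p x.1) ≤ s y := by
    intro y hy
    have hmemW : ∀ x : ↥{x | x ∈ W \ I ∧ truncTop z zs x = y}, x.1 ∈ W := fun x => x.2.1.1
    have hsub : ∀ u : Finset ↥{x | x ∈ W \ I ∧ truncTop z zs x = y},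
        ∑ x ∈ u, p x.1 ≤ s y := by
      intro u
      have h1 : Tendsto (fun i => ∑ x ∈ u, a i x.1) atTop (𝓝 (∑ x ∈ u, p x.1)) :=
        tendsto_finset_sum _ (fun x _ => hp x.1 (hmemW x))
      refine le_of_tendsto_of_tendsto' h1 (hs y hy) (fun i => ?_)
      rw [hgroup i y]
      have h2 : ∑ x ∈ u, a i x.1 = ∑ v ∈ u.image Subtype.val, a i v := by
        rw [Finset.sum_image (fun x _ x' _ h => Subtype.ext h)]
      rw [h2, ← Finset.sum_filter_ne_zero]
      refine Finset.sum_le_sum_of_subset_of_nonneg ?_ (fun v _ _ => hann i v)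
      intro v hv
      rw [Finset.mem_filter] at hv ⊢
      obtain ⟨hv1, hv2⟩ := hv
      simp only [Finset.mem_image] at hv1
      obtain ⟨x, _, rfl⟩ := hv1
      exact ⟨(hasupp i).mem_toFinset.mpr hv2, x.2⟩
    have hsummp : Summable (fun x : ↥{x | x ∈ W \ I ∧ truncTop z zs x = y} => p x.1) :=
      summable_of_sum_le (fun x => hp0 x.1 (hmemW x)) hsub
    exact Summable.tsum_le_of_sum_le hsummp hsub
  have ht0 : ∀ y ∈ D, 0 ≤ (∑' x : ↥{x | x ∈ W \ I ∧ truncTop z zs x = y}, p x.1) := by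
    intro y hy
    exact tsum_nonneg fun x => hp0 x.1 x.2.1.1
  refine ⟨hSummableW, hSummableI, hSummableD, ?_, hpart5⟩
  -- part 4
  refine Summable.of_norm (Summable.of_nonneg_of_le (fun y => norm_nonneg _) (fun y => ?_) hnormD)
  rw [norm_smul, norm_smul]
  have h1 := hpart5 y.1 y.2
  have h2 := ht0 y.1 y.2
  have h3 : |s y.1 - ∑' x : ↥{x | x ∈ W \ I ∧ truncTop z zs x = y.1}, p x.1| ≤ |s y.1| := by
    rw [abs_sub_comm]
    rw [abs_le]
    constructor
    · rw [abs_of_nonneg (hs0 y.1 y.2)]; linarith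
    · rw [abs_of_nonneg (hs0 y.1 y.2)]; linarith
  exact mul_le_mul_of_nonneg_right h3 (norm_nonneg _)

end Paper
end
end
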